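/- arXiv:2512.03617 — 4 statements merged into one kernel-verified Lean document; each statement's English description precedes it below -/
import Mathlib

section
/- Let p = Σ_{j=0}^{s} c_j χ^{m_j} be a nonzero Laurent polynomial in n variables with c_j ≠ 0 and distinct exponents m_j ∈ ℤ^n. Then p^{n+1}·det(D²log p) = Σ_J (n!·vol(conv{m_j : j∈J}))² · Π_{j∈J} c_j χ^{m_j}, where the sum runs over all subsets J ⊂ {0,…,s} of cardinality n+1, D_i = x_i ∂/∂x_i, and vol denotes Lebesgue measure on ℝ^n. -/
/- Laurent polynomials in n variables over ℂ, the logarithmic derivative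
operators `D_i = x_i ∂/∂x_i`, and the operator `δ(p) = det(D_i D_j log p)`
with values in the fraction field. STATEMENT 0 expresses the formula
`p^(n+1)·δ(p) = Σ_J (n!·vol(conv{m_j : j∈J}))²·Π_{j∈J} c_j χ^{m_j}`. -/

open MeasureTheory

noncomputable section

/-- Laurent polynomials in `n` variables over `ℂ`. -/
abbrev LP (n : ℕ) := AddMonoidAlgebra ℂ (Fin n → ℤ)

instance {n : ℕ} : IsDomain (LP n) := NoZeroDivisors.to_isDomain _

/-- The operator `D_i = x_i ∂/∂x_i` on Laurent polynomials:
`D_i χ^m = m_i χ^m`. -/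
def Dop {n : ℕ} (i : Fin n) (p : LP n) : LP n :=
  p.coeff.sum fun m c => AddMonoidAlgebra.single m ((m i : ℂ) * c)

/-- `δ(p) = det((D_i D_j log p)_{i,j})` as an element of the field of rational
functions; the entry `D_i D_j log p` equals `(D_iD_j p · p − D_i p · D_j p)/p²`. -/
def deltaOp {n : ℕ} (p : LP n) : FractionRing (LP n) :=
  Matrix.det (fun i j : Fin n =>
    algebraMap (LP n) (FractionRing (LP n)) (Dop i (Dop j p) * p - Dop i p * Dop j p) /
      (algebraMap (LP n) (FractionRing (LP n)) p) ^ 2)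

/-- The canonical embedding `ℤ^n → ℝ^n`. -/
def emb {n : ℕ} (m : Fin n → ℤ) : Fin n → ℝ := fun i => (m i : ℝ)


section Aux
open MeasureTheory Module Pointwise Finset

def corner (n : ℕ) : Set (Fin n → ℝ) := {x | (∀ i, 0 ≤ x i) ∧ ∑ i, x i ≤ 1}

lemma corner_zero_mem (n : ℕ) : (0 : Fin n → ℝ) ∈ corner n := by
  constructor
  · intro i; simp
  · simp

lemma corner_smul {n : ℕ} {s : ℝ} (hs : 0 ≤ s) :
    {y : Fin n → ℝ | (∀ i, 0 ≤ y i) ∧ ∑ i, y i ≤ s} = s • corner n := by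
  rcases eq_or_lt_of_le hs with h | h
  · subst h
    rw [Set.zero_smul_set ⟨0, corner_zero_mem n⟩]
    ext y
    simp only [Set.mem_setOf_eq, Set.mem_singleton_iff]
    constructor
    · rintro ⟨h0, h1⟩
      funext i
      have : ∀ j ∈ Finset.univ, (0:ℝ) ≤ y j := fun j _ => h0 j
      have hz := (Finset.sum_eq_zero_iff_of_nonneg this).1 (le_antisymm h1 (Finset.sum_nonneg this))
      exact hz i (Finset.mem_univ i)
    · rintro rfl; exact ⟨fun i => le_rfl, by simp⟩
  · ext y
    simp only [Set.mem_setOf_eq, Set.mem_smul_set]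
    constructor
    · rintro ⟨h0, h1⟩
      refine ⟨s⁻¹ • y, ⟨fun i => mul_nonneg (inv_nonneg.2 hs) (h0 i), ?_⟩, by
        funext i; simp only [Pi.smul_apply, smul_eq_mul, ← mul_assoc, mul_inv_cancel₀ h.ne', one_mul]⟩
      simp only [Pi.smul_apply, smul_eq_mul, ← Finset.mul_sum]
      rw [inv_mul_le_iff₀ h, mul_one]
      exact h1
    · rintro ⟨z, ⟨hz0, hz1⟩, rfl⟩
      refine ⟨fun i => mul_nonneg hs (hz0 i), ?_⟩
      simp only [Pi.smul_apply, smul_eq_mul, ← Finset.mul_sum]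
      calc s * ∑ i, z i ≤ s * 1 := by nlinarith [Finset.sum_nonneg (fun i (_ : i ∈ Finset.univ) => hz0 i)]
        _ = s := mul_one s

lemma corner_measurable (n : ℕ) : MeasurableSet (corner n) := by
  have : corner n = (⋂ i, {x : Fin n → ℝ | 0 ≤ x i}) ∩ {x | ∑ i, x i ≤ 1} := by
    ext x; simp [corner, Set.mem_iInter]
  rw [this]
  refine MeasurableSet.inter (MeasurableSet.iInter fun i => ?_) ?_
  · exact measurableSet_le measurable_const (measurable_pi_apply i)
  · exact measurableSet_le (by fun_prop) measurable_const

lemma volume_corner (n : ℕ) : volume (corner n) = ENNReal.ofReal (1 / n.factorial) := by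
  induction n with
  | zero =>
    have : corner 0 = Set.univ := by
      ext x; simp [corner]
    rw [this, volume_pi, Measure.pi_univ]; simp
  | succ n ih =>
    set S : Set (ℝ × (Fin n → ℝ)) :=
      {q | 0 ≤ q.1 ∧ (∀ i, 0 ≤ q.2 i) ∧ q.1 + ∑ i, q.2 i ≤ 1} with hS
    have hSm : MeasurableSet S := by
      have hrw : S = {q : ℝ × (Fin n → ℝ) | 0 ≤ q.1} ∩
          ((⋂ i, {q : ℝ × (Fin n → ℝ) | 0 ≤ q.2 i}) ∩
            {q : ℝ × (Fin n → ℝ) | q.1 + ∑ i, q.2 i ≤ 1}) := by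
        ext q
        simp only [hS, Set.mem_setOf_eq, Set.mem_inter_iff, Set.mem_iInter]
      rw [hrw]
      exact (measurableSet_le measurable_const measurable_fst).inter
        ((MeasurableSet.iInter fun i => measurableSet_le measurable_const
            ((measurable_pi_apply i).comp measurable_snd)).inter
          (measurableSet_le (measurable_fst.add (Finset.measurable_sum _ fun i _ =>
            (measurable_pi_apply i).comp measurable_snd)) measurable_const))
    have hpre : corner (n+1) = (MeasurableEquiv.piFinSuccAbove (fun _ => ℝ) 0) ⁻¹' S := by
      ext x
      simp only [corner, Set.mem_setOf_eq, Set.mem_preimage,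
        MeasurableEquiv.piFinSuccAbove, MeasurableEquiv.coe_mk, Equiv.coe_fn_mk]
      rw [Fin.forall_fin_succ, Fin.sum_univ_succ]
      constructor
      · rintro ⟨⟨h0, hs⟩, h1⟩
        exact ⟨h0, by simpa [Fin.removeNth, Fin.succAbove, Fin.tail] using hs,
          by simpa [Fin.removeNth, Fin.succAbove, Fin.tail] using h1⟩
      · rintro ⟨h0, hs, h1⟩
        exact ⟨⟨h0, by simpa [Fin.removeNth, Fin.succAbove, Fin.tail] using hs⟩,
          by simpa [Fin.removeNth, Fin.succAbove, Fin.tail] using h1⟩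
    have hvol : volume (corner (n+1)) = (volume.prod volume) S := by
      rw [hpre]
      exact (volume_preserving_piFinSuccAbove (fun _ : Fin (n+1) => ℝ) 0).measure_preimage
        hSm.nullMeasurableSet
    rw [hvol, Measure.prod_apply hSm]
    have hslice : ∀ t : ℝ, volume (Prod.mk t ⁻¹' S) =
        Set.indicator (Set.Icc (0:ℝ) 1)
          (fun t => ENNReal.ofReal ((1 - t)^n) * volume (corner n)) t := by
      intro t
      rcases le_or_gt 0 t with h0 | h0
      · rcases le_or_gt t 1 with h1 | h1
        · rw [Set.indicator_of_mem (Set.mem_Icc.2 ⟨h0, h1⟩)]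
          have : Prod.mk t ⁻¹' S = (1 - t) • corner n := by
            rw [← corner_smul (by linarith : (0:ℝ) ≤ 1 - t)]
            ext y
            simp only [Set.mem_preimage, hS, Set.mem_setOf_eq]
            constructor
            · rintro ⟨-, hy, hsum⟩; exact ⟨hy, by linarith⟩
            · rintro ⟨hy, hsum⟩; exact ⟨h0, hy, by linarith⟩
          rw [this, Measure.addHaar_smul_of_nonneg volume (by linarith) (corner n)]
          congr 1
          simp [Module.finrank_fintype_fun_eq_card]
        · rw [Set.indicator_of_notMem (by simp [Set.mem_Icc]; intro; linarith)]
          have he : Prod.mk t ⁻¹' S = (∅ : Set (Fin n → ℝ)) := by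
            ext y
            simp only [Set.mem_preimage, hS, Set.mem_setOf_eq, Set.mem_empty_iff_false,
              iff_false, not_and]
            intro _ hy
            have : (0:ℝ) ≤ ∑ i, y i := Finset.sum_nonneg fun i _ => hy i
            intro hc; linarith
          rw [he]; simp
      · rw [Set.indicator_of_notMem (by simp [Set.mem_Icc]; intro; linarith)]
        have he : Prod.mk t ⁻¹' S = (∅ : Set (Fin n → ℝ)) := by
          ext y
          simp only [Set.mem_preimage, hS, Set.mem_setOf_eq, Set.mem_empty_iff_false,
            iff_false, not_and]
          intro hc; linarith
        rw [he]; simp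
    calc ∫⁻ t, volume (Prod.mk t ⁻¹' S)
        = ∫⁻ t, Set.indicator (Set.Icc (0:ℝ) 1)
            (fun t => ENNReal.ofReal ((1 - t)^n) * volume (corner n)) t := by
          exact lintegral_congr hslice
      _ = (∫⁻ t in Set.Icc (0:ℝ) 1, ENNReal.ofReal ((1 - t)^n)) * volume (corner n) := by
          rw [lintegral_indicator measurableSet_Icc, lintegral_mul_const]
          exact (ENNReal.measurable_ofReal.comp (by fun_prop))
      _ = ENNReal.ofReal (1 / (n+1)) * ENNReal.ofReal (1 / n.factorial) := by
          rw [ih]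
          congr 1
          rw [← MeasureTheory.setLIntegral_congr (MeasureTheory.Ioc_ae_eq_Icc (α := ℝ) (a := 0) (b := 1))]
          rw [← MeasureTheory.ofReal_integral_eq_lintegral_ofReal]
          · congr 1
            have h1 : ∫ t in Set.Ioc (0:ℝ) 1, (1 - t)^n = ∫ t in (0:ℝ)..1, (1 - t)^n := by
              rw [intervalIntegral.integral_of_le (by norm_num)]
            rw [h1]
            have h2 := intervalIntegral.integral_comp_sub_left (a := (0:ℝ)) (b := 1)
              (fun x => x ^ n) 1
            simp only [sub_zero, sub_self] at h2
            rw [h2, integral_pow]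
            norm_num
          · exact (ContinuousOn.integrableOn_compact isCompact_Icc
              (Continuous.continuousOn (by fun_prop))).mono_set Set.Ioc_subset_Icc_self
          · filter_upwards [ae_restrict_mem measurableSet_Ioc] with t ht
            have : (0:ℝ) ≤ 1 - t := by linarith [ht.2]
            positivity
      _ = ENNReal.ofReal (1 / (n+1).factorial) := by
          rw [← ENNReal.ofReal_mul (by positivity)]
          congr 1
          rw [Nat.factorial_succ]
          push_cast
          field_simp

lemma convexHull_corner (n : ℕ) :
    convexHull ℝ ({0} ∪ Set.range fun j : Fin n => Pi.single j (1:ℝ)) = corner n := by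
  apply le_antisymm
  · apply convexHull_min
    · rintro x (rfl | ⟨j, rfl⟩)
      · exact ⟨fun i => le_rfl, by simp⟩
      · refine ⟨fun i => by simp [Pi.single_apply]; positivity, ?_⟩
        simp [Pi.single_apply]
    · rintro x ⟨hx0, hx1⟩ y ⟨hy0, hy1⟩ s t hs ht hst
      refine ⟨fun i => add_nonneg (mul_nonneg hs (hx0 i)) (mul_nonneg ht (hy0 i)), ?_⟩
      simp only [Pi.add_apply, Pi.smul_apply, smul_eq_mul, Finset.sum_add_distrib,
        ← Finset.mul_sum]
      nlinarith
  · intro x hx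
    obtain ⟨h0, h1⟩ := hx
    set w : Fin (n+1) → ℝ := Fin.cons (1 - ∑ i, x i) x with hw
    set z : Fin (n+1) → (Fin n → ℝ) := Fin.cons 0 (fun j => Pi.single j 1) with hz
    have hw0 : ∀ i ∈ Finset.univ, 0 ≤ w i := by
      intro i _
      induction i using Fin.cases with
      | zero => simpa [hw] using sub_nonneg.2 h1
      | succ j => simpa [hw] using h0 j
    have hwsum : ∑ i, w i = 1 := by
      rw [hw, Fin.sum_cons]; ring
    have hmem : ∀ i ∈ Finset.univ, z i ∈
        ({0} ∪ Set.range fun j : Fin n => Pi.single j (1:ℝ)) := by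
      intro i _
      induction i using Fin.cases with
      | zero => exact Or.inl rfl
      | succ j => exact Or.inr ⟨j, rfl⟩
    have hmem2 := Finset.centerMass_mem_convexHull Finset.univ hw0 (by rw [hwsum]; norm_num) hmem
    rw [Finset.centerMass_eq_of_sum_1 _ _ hwsum] at hmem2
    have hxx : ∑ i, w i • z i = x := by
      rw [Fin.sum_univ_succ]
      simp only [hw, hz, Fin.cons_zero, Fin.cons_succ, smul_zero, zero_add]
      have hsing : ∀ j : Fin n, x j • (Pi.single j (1:ℝ) : Fin n → ℝ) =
          (Pi.single j (x j) : Fin n → ℝ) := fun j => by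
        rw [← Pi.single_smul, smul_eq_mul, mul_one]
      simp_rw [hsing]
      exact Finset.univ_sum_single x
    rwa [hxx] at hmem2

lemma volume_convexHull_range {n : ℕ} (a : Fin (n+1) → (Fin n → ℝ)) :
    volume (convexHull ℝ (Set.range a)) =
      ENNReal.ofReal (|(Matrix.of fun i j : Fin n => a j.succ i - a 0 i).det| / n.factorial) := by
  set M : Matrix (Fin n) (Fin n) ℝ := Matrix.of fun i j : Fin n => a j.succ i - a 0 i with hM
  set L : (Fin n → ℝ) →ₗ[ℝ] (Fin n → ℝ) := Matrix.toLin' M with hL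
  set φ : (Fin n → ℝ) →ᵃ[ℝ] (Fin n → ℝ) :=
    { toFun := fun x => a 0 + L x
      linear := L
      map_vadd' := fun p v => by
        simp only [vadd_eq_add, map_add]
        abel } with hφ
  have key : Set.range a = φ '' ({0} ∪ Set.range fun j : Fin n => Pi.single j (1:ℝ)) := by
    ext y
    constructor
    · rintro ⟨i, rfl⟩
      induction i using Fin.cases with
      | zero => exact ⟨0, Or.inl rfl, by simp [hφ]⟩
      | succ j =>
        refine ⟨Pi.single j 1, Or.inr ⟨j, rfl⟩, ?_⟩
        show a 0 + L (Pi.single j 1) = a j.succ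
        funext i
        simp [hL, Matrix.toLin'_apply, Matrix.mulVec_single, hM]
    · rintro ⟨x, (rfl | ⟨j, rfl⟩), rfl⟩
      · exact ⟨0, by simp [hφ]⟩
      · refine ⟨j.succ, ?_⟩
        show a j.succ = a 0 + L (Pi.single j 1)
        funext i
        simp [hL, Matrix.toLin'_apply, Matrix.mulVec_single, hM]
  rw [key, ← AffineMap.image_convexHull, convexHull_corner]
  have himg : ⇑φ '' corner n = a 0 +ᵥ (L '' corner n) := by
    rw [← Set.image_vadd, ← Set.image_comp]
    rfl
  rw [himg, measure_vadd, Measure.addHaar_image_linearMap, LinearMap.det_toLin', volume_corner,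
    ← ENNReal.ofReal_mul (abs_nonneg _)]
  congr 1
  rw [mul_one_div]

variable {γ : Type*} [DecidableEq γ] [Inhabited γ] {R : Type*} [CommRing R]

/-- Enumeration of a finset via its underlying list. -/
def enumOf (J : Finset γ) : ℕ → γ := fun i => J.toList.getD i default

lemma enumOf_mem {J : Finset γ} {N : ℕ} (h : J.card = N) (i : Fin N) :
    enumOf J i ∈ J := by
  have hi : (i : ℕ) < J.toList.length := by rw [Finset.length_toList, h]; exact i.isLt
  rw [enumOf, List.getD_eq_getElem _ _ hi]
  exact Finset.mem_toList.1 (List.getElem_mem hi)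

lemma enumOf_inj {J : Finset γ} {N : ℕ} (h : J.card = N) {i i' : Fin N}
    (hii : enumOf J i = enumOf J i') : i = i' := by
  have hi : (i : ℕ) < J.toList.length := by rw [Finset.length_toList, h]; exact i.isLt
  have hi' : (i' : ℕ) < J.toList.length := by rw [Finset.length_toList, h]; exact i'.isLt
  simp only [enumOf] at hii
  rw [List.getD_eq_getElem _ _ hi, List.getD_eq_getElem _ _ hi'] at hii
  exact Fin.ext ((List.Nodup.getElem_inj_iff (Finset.nodup_toList J)).1 hii)

lemma enumOf_image {J : Finset γ} {N : ℕ} (h : J.card = N) :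
    Finset.image (fun i : Fin N => enumOf J i) Finset.univ = J := by
  apply Finset.eq_of_subset_of_card_le
  · intro m hm
    obtain ⟨i, _, rfl⟩ := Finset.mem_image.1 hm
    exact enumOf_mem h i
  · rw [h, Finset.card_image_of_injective _ (fun i i' hii => enumOf_inj h hii)]
    simp

lemma enumOf_surj {J : Finset γ} {N : ℕ} (h : J.card = N) {m : γ} (hm : m ∈ J) :
    ∃ i : Fin N, enumOf J i = m := by
  rw [← enumOf_image h] at hm
  obtain ⟨i, _, rfl⟩ := Finset.mem_image.1 hm
  exact ⟨i, rfl⟩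

lemma prod_enumOf {J : Finset γ} {N : ℕ} (h : J.card = N) (w : γ → R) :
    ∏ i : Fin N, w (enumOf J i) = ∏ m ∈ J, w m := by
  refine Finset.prod_bij (fun i _ => enumOf J i) (fun i _ => enumOf_mem h i)
    (fun i _ i' _ hii => enumOf_inj h hii) ?_ (fun i _ => rfl)
  intro m hm
  obtain ⟨i, hi⟩ := enumOf_surj h hm
  exact ⟨i, Finset.mem_univ i, hi⟩

lemma card_image_fin {N : ℕ} (r : Fin N → γ) (hinj : Function.Injective r) :
    (Finset.image r Finset.univ).card = N := by
  rw [Finset.card_image_of_injective _ hinj, Finset.card_univ, Fintype.card_fin]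

def toImg {N : ℕ} (r : Fin N → γ) : Fin N → (Finset.image r Finset.univ : Finset γ) :=
  fun k => ⟨r k, Finset.mem_image_of_mem r (Finset.mem_univ k)⟩

def enumImg {N : ℕ} (r : Fin N → γ) (hinj : Function.Injective r) :
    Fin N → (Finset.image r Finset.univ : Finset γ) :=
  fun k => ⟨enumOf (Finset.image r Finset.univ) k, enumOf_mem (card_image_fin r hinj) k⟩

lemma toImg_bij {N : ℕ} (r : Fin N → γ) (hinj : Function.Injective r) :
    Function.Bijective (toImg r) :=
  (Fintype.bijective_iff_injective_and_card _).2
    ⟨fun a b hab => hinj (congrArg Subtype.val hab),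
      by rw [Fintype.card_coe, card_image_fin r hinj, Fintype.card_fin]⟩

lemma enumImg_bij {N : ℕ} (r : Fin N → γ) (hinj : Function.Injective r) :
    Function.Bijective (enumImg r hinj) :=
  (Fintype.bijective_iff_injective_and_card _).2
    ⟨fun a b hab => enumOf_inj (card_image_fin r hinj) (congrArg Subtype.val hab),
      by rw [Fintype.card_coe, card_image_fin r hinj, Fintype.card_fin]⟩

def permOf {N : ℕ} (r : Fin N → γ) (hinj : Function.Injective r) : Equiv.Perm (Fin N) :=
  (Equiv.ofBijective (toImg r) (toImg_bij r hinj)).trans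
    (Equiv.ofBijective (enumImg r hinj) (enumImg_bij r hinj)).symm

lemma enumOf_permOf {N : ℕ} (r : Fin N → γ) (hinj : Function.Injective r) (k : Fin N) :
    enumOf (Finset.image r Finset.univ) (permOf r hinj k) = r k := by
  have h := congrArg Subtype.val
    ((Equiv.ofBijective (enumImg r hinj) (enumImg_bij r hinj)).apply_symm_apply
      (Equiv.ofBijective (toImg r) (toImg_bij r hinj) k))
  exact h

/-- The inner sum over permutations gives the square of the determinant. -/
lemma perm_sum {N : ℕ} (e : Fin N → γ) (u : Fin N → γ → R) (w : γ → R) :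
    ∑ π : Equiv.Perm (Fin N), (∏ i, u i (e (π i)) * w (e (π i))) *
        (Matrix.of fun i j : Fin N => u j (e (π i))).det
      = (Matrix.of fun i j : Fin N => u i (e j)).det ^ 2 * ∏ i, w (e i) := by
  set D := (Matrix.of fun i j : Fin N => u j (e i)).det with hD
  have key : ∀ π : Equiv.Perm (Fin N),
      (Matrix.of fun i j : Fin N => u j (e (π i))).det
        = (Equiv.Perm.sign π : ℤ) * D := by
    intro π
    have h := Matrix.det_permute π (Matrix.of fun i j : Fin N => u j (e i))
    rw [← h]
    congr 1
  have hw : ∀ π : Equiv.Perm (Fin N), ∏ i, w (e (π i)) = ∏ i, w (e i) := fun π =>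
    Equiv.prod_comp π (fun i => w (e i))
  calc ∑ π : Equiv.Perm (Fin N), (∏ i, u i (e (π i)) * w (e (π i))) *
        (Matrix.of fun i j : Fin N => u j (e (π i))).det
      = ∑ π : Equiv.Perm (Fin N), ((Equiv.Perm.sign π : ℤ) * ∏ i, u i (e (π i))) *
          (D * ∏ i, w (e i)) := by
        refine Finset.sum_congr rfl fun π _ => ?_
        rw [key π, Finset.prod_mul_distrib, hw π]
        ring
    _ = (∑ π : Equiv.Perm (Fin N), (Equiv.Perm.sign π : ℤ) * ∏ i, u i (e (π i))) *
          (D * ∏ i, w (e i)) := by rw [← Finset.sum_mul]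
    _ = D * (D * ∏ i, w (e i)) := by
        congr 1
        rw [hD, Matrix.det_apply']
        rfl
    _ = (Matrix.of fun i j : Fin N => u i (e j)).det ^ 2 * ∏ i, w (e i) := by
        have : D = (Matrix.of fun i j : Fin N => u i (e j)).det := by
          rw [hD, ← Matrix.det_transpose]
          congr 1
        rw [this]; ring

/-- Cauchy–Binet style expansion for `U diag(w) Uᵀ`. -/
lemma det_expand {N : ℕ} (supp : Finset γ) (w : γ → R) (u : Fin N → γ → R) :
    (Matrix.of fun i j : Fin N => ∑ m ∈ supp, u i m * u j m * w m).det =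
      ∑ J ∈ supp.powersetCard N,
        (Matrix.of fun i j : Fin N => u i (enumOf J j)).det ^ 2 * ∏ m ∈ J, w m := by
  classical
  have h1 : (Matrix.of fun i j : Fin N => ∑ m ∈ supp, u i m * u j m * w m).det
      = ∑ r ∈ Fintype.piFinset (fun _ : Fin N => supp),
          (Matrix.of fun i j : Fin N => u i (r i) * u j (r i) * w (r i)).det := by
    have h := (Matrix.detRowAlternating (R := R) (n := Fin N)).toMultilinearMap.map_sum_finset
      (A := fun _ : Fin N => supp) (g := fun i m => fun j => u i m * u j m * w m)
    have hM : (Matrix.of fun i j : Fin N => ∑ m ∈ supp, u i m * u j m * w m)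
        = (fun i => ∑ m ∈ supp, (fun j => u i m * u j m * w m)) := by
      funext i j
      simp [Finset.sum_apply]
    calc (Matrix.of fun i j : Fin N => ∑ m ∈ supp, u i m * u j m * w m).det
        = (Matrix.detRowAlternating (R := R) (n := Fin N)).toMultilinearMap
            (fun i => ∑ m ∈ supp, (fun j => u i m * u j m * w m)) := by rw [← hM]; rfl
      _ = ∑ r ∈ Fintype.piFinset (fun _ : Fin N => supp),
            (Matrix.of fun i j : Fin N => u i (r i) * u j (r i) * w (r i)).det := h
  set T : (Fin N → γ) → R := fun r => (∏ i, u i (r i) * w (r i)) *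
      (Matrix.of fun i j : Fin N => u j (r i)).det with hT
  have h2 : ∀ r : Fin N → γ,
      (Matrix.of fun i j : Fin N => u i (r i) * u j (r i) * w (r i)).det = T r := by
    intro r
    rw [hT]
    simp only
    rw [← Matrix.det_mul_column (fun i => u i (r i) * w (r i))
      (Matrix.of fun i j : Fin N => u j (r i))]
    congr 1
    ext i j
    simp only [Matrix.of_apply]
    ring
  have h4 : ∑ r ∈ Fintype.piFinset (fun _ : Fin N => supp), T r
      = ∑ r ∈ (Fintype.piFinset (fun _ : Fin N => supp)).filter
          (fun r => Function.Injective r), T r := by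
    symm
    apply Finset.sum_filter_of_ne
    intro r _ hTr
    by_contra hni
    apply hTr
    rw [Function.not_injective_iff] at hni
    obtain ⟨i, j, hrij, hij⟩ := hni
    have hz : (Matrix.of fun i j : Fin N => u j (r i)).det = 0 :=
      Matrix.det_zero_of_row_eq hij (by funext j'; simp [hrij])
    rw [hT]
    simp only
    rw [hz, mul_zero]
  have h5 : ∑ r ∈ (Fintype.piFinset (fun _ : Fin N => supp)).filter
        (fun r => Function.Injective r), T r
      = ∑ J ∈ supp.powersetCard N, ∑ π : Equiv.Perm (Fin N),
          T (fun i => enumOf J (π i)) := by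
    rw [← Finset.sum_sigma (supp.powersetCard N)
      (fun _ : Finset γ => (Finset.univ : Finset (Equiv.Perm (Fin N))))
      (fun x : Σ _ : Finset γ, Equiv.Perm (Fin N) => T (fun i => enumOf x.1 (x.2 i)))]
    symm
    refine Finset.sum_bij' (fun (x : Σ _ : Finset γ, Equiv.Perm (Fin N)) _ =>
        fun k : Fin N => enumOf x.1 (x.2 k))
      (fun r hr => ⟨Finset.image r Finset.univ,
        permOf r (Finset.mem_filter.1 hr).2⟩) ?_ ?_ ?_ ?_ ?_
    · rintro ⟨J, π⟩ hx
      have hJ := Finset.mem_powersetCard.1 (Finset.mem_sigma.1 hx).1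
      refine Finset.mem_filter.2 ⟨Fintype.mem_piFinset.2 fun k => hJ.1 (enumOf_mem hJ.2 (π k)), ?_⟩
      intro a b hab
      exact π.injective (enumOf_inj hJ.2 hab)
    · intro r hr
      have hr' := Finset.mem_filter.1 hr
      refine Finset.mem_sigma.2 ⟨Finset.mem_powersetCard.2 ⟨?_, card_image_fin r hr'.2⟩,
        Finset.mem_univ _⟩
      intro m hm
      obtain ⟨k, _, rfl⟩ := Finset.mem_image.1 hm
      exact Fintype.mem_piFinset.1 hr'.1 k
    · rintro ⟨J, π⟩ hx
      have hJ := Finset.mem_powersetCard.1 (Finset.mem_sigma.1 hx).1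
      have hinj : Function.Injective (fun k : Fin N => enumOf J (π k)) :=
        fun a b hab => π.injective (enumOf_inj hJ.2 hab)
      have himg : Finset.image (fun k : Fin N => enumOf J (π k)) Finset.univ = J := by
        have hcomp : (fun k : Fin N => enumOf J (π k))
            = (fun k : Fin N => enumOf J k) ∘ π := rfl
        rw [hcomp, ← Finset.image_image, Finset.image_univ_equiv, enumOf_image hJ.2]
      have h1k : ∀ k, enumOf J (permOf _ hinj k) = enumOf J (π k) := by
        intro k
        have := enumOf_permOf _ hinj k
        rwa [himg] at this
      exact Sigma.ext himg (heq_of_eq (Equiv.ext fun k => enumOf_inj hJ.2 (h1k k)))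
    · intro r hr
      funext k
      exact enumOf_permOf r (Finset.mem_filter.1 hr).2 k
    · rintro ⟨J, π⟩ _
      rfl
  have h6 : ∀ J ∈ supp.powersetCard N,
      ∑ π : Equiv.Perm (Fin N), T (fun i => enumOf J (π i))
        = (Matrix.of fun i j : Fin N => u i (enumOf J j)).det ^ 2 * ∏ m ∈ J, w m := by
    intro J hJ
    have hcard := (Finset.mem_powersetCard.1 hJ).2
    have := perm_sum (fun i : Fin N => enumOf J i) u w
    rw [prod_enumOf hcard w] at this
    exact this
  rw [h1, Finset.sum_congr rfl (fun r _ => h2 r), h4, h5,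
    Finset.sum_congr rfl h6]

end Aux

section Bordered
variable {R : Type*} [CommRing R]

/-- Row-reduction identity for a bordered determinant. -/
lemma bordered_row {N : ℕ} (C : Matrix (Fin (N+1)) (Fin (N+1)) R) :
    C 0 0 ^ N * C.det = C 0 0 * (Matrix.of fun i j : Fin N =>
      C 0 0 * C i.succ j.succ - C i.succ 0 * C 0 j.succ).det := by
  classical
  set E : Matrix (Fin (N+1)) (Fin (N+1)) R := Matrix.of fun i j =>
    Fin.cases (motive := fun _ => R) (Fin.cases (motive := fun _ => R) 1 (fun i' => -C i'.succ 0) i)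
      (fun j' => if i = j'.succ then C 0 0 else 0) j with hE
  have hEdet : E.det = C 0 0 ^ N := by
    rw [Matrix.det_of_lowerTriangular E ?ht]
    case ht =>
      intro i j hij
      have hij' : (i : ℕ) < (j : ℕ) := hij
      induction j using Fin.cases with
      | zero => exact absurd hij' (by simp)
      | succ j' =>
        simp only [hE, Matrix.of_apply, Fin.cases_succ]
        exact if_neg (fun h => absurd hij' (by rw [h]; exact lt_irrefl _))
    have hdiag : ∀ i : Fin (N+1), E i i =
        Fin.cases (motive := fun _ => R) 1 (fun _ => C 0 0) i := by
      intro i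
      induction i using Fin.cases with
      | zero => simp [hE]
      | succ i' => simp [hE]
    calc ∏ i, E i i = ∏ i : Fin (N+1), Fin.cases (motive := fun _ => R) 1 (fun _ => C 0 0) i := by
          exact Finset.prod_congr rfl fun i _ => hdiag i
      _ = C 0 0 ^ N := by
          rw [Fin.prod_univ_succ]
          simp
  have hmul : ∀ i j, (E * C) i j =
      Fin.cases (motive := fun _ => R) (C 0 j)
        (fun i' => C 0 0 * C i'.succ j - C i'.succ 0 * C 0 j) i := by
    intro i j
    rw [Matrix.mul_apply, Fin.sum_univ_succ]
    induction i using Fin.cases with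
    | zero =>
      simp only [hE, Matrix.of_apply, Fin.cases_zero, Fin.cases_succ]
      rw [Finset.sum_eq_zero (fun k _ => by
        rw [if_neg (fun h => Fin.succ_ne_zero k h.symm), zero_mul]), add_zero, one_mul]
    | succ i' =>
      simp only [hE, Matrix.of_apply, Fin.cases_zero, Fin.cases_succ]
      rw [Finset.sum_congr rfl (fun k _ => by
        rw [show (if (i'.succ : Fin (N+1)) = k.succ then C 0 0 else 0) * C k.succ j
          = if k = i' then C 0 0 * C k.succ j else 0 by
            by_cases hk : k = i'
            · subst hk; simp
            · rw [if_neg (by simp [Fin.succ_inj]; exact fun h => (hk h.symm).elim), if_neg hk,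
                zero_mul]]),
        Finset.sum_ite_eq' Finset.univ i' (fun k => C 0 0 * C k.succ j)]
      simp
      ring
  have hEC : (E * C).det = C 0 0 * (Matrix.of fun i j : Fin N =>
      C 0 0 * C i.succ j.succ - C i.succ 0 * C 0 j.succ).det := by
    rw [Matrix.det_succ_column_zero]
    rw [Finset.sum_eq_single_of_mem 0 (Finset.mem_univ 0)]
    · rw [hmul]
      simp only [Fin.val_zero, pow_zero, one_mul, Fin.cases_zero]
      congr 1
      congr 1
      ext i j
      simp only [Matrix.submatrix_apply, Fin.succAbove_zero, Matrix.of_apply]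
      rw [hmul]
      simp
    · intro i _ hi
      obtain ⟨i', rfl⟩ := Fin.exists_succ_eq.2 hi
      rw [hmul]
      simp only [Fin.cases_succ]
      rw [show C 0 0 * C i'.succ 0 - C i'.succ 0 * C 0 0 = 0 by ring]
      ring
  have := Matrix.det_mul E C
  rw [hEdet] at this
  rw [← this, hEC]

/-- Column-reduction identity for a bordered determinant with a row of ones. -/
lemma bordered_col_ones {N : ℕ} (C : Matrix (Fin (N+1)) (Fin (N+1)) R)
    (h0 : ∀ j, C 0 j = 1) :
    C.det = (Matrix.of fun i j : Fin N => C i.succ j.succ - C i.succ 0).det := by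
  classical
  set F : Matrix (Fin (N+1)) (Fin (N+1)) R := Matrix.of fun i j =>
    Fin.cases (motive := fun _ => R) (Fin.cases (motive := fun _ => R) 1 (fun _ => 0) i)
      (fun j' => if i = 0 then -1 else if i = j'.succ then 1 else 0) j with hF
  have hFdet : F.det = 1 := by
    rw [Matrix.det_of_upperTriangular (M := F) ?ht]
    case ht =>
      intro i j hij
      have hij' : (j : ℕ) < (i : ℕ) := hij
      induction j using Fin.cases with
      | zero =>
        induction i using Fin.cases with
        | zero => exact absurd hij' (by simp)
        | succ i' => simp [hF]
      | succ j' =>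
        simp only [hF, Matrix.of_apply, Fin.cases_succ]
        rw [if_neg (fun h => by rw [h] at hij'; simp at hij'),
          if_neg (fun h => absurd hij' (by rw [h]; exact lt_irrefl _))]
    have hdiag : ∀ i : Fin (N+1), F i i = 1 := by
      intro i
      induction i using Fin.cases with
      | zero => simp [hF]
      | succ i' => simp [hF, Fin.succ_ne_zero]
    rw [Finset.prod_congr rfl fun i _ => hdiag i]
    simp
  have hmul : ∀ i (j : Fin N), (C * F) i j.succ = C i j.succ - C i 0 := by
    intro i j
    rw [Matrix.mul_apply, Fin.sum_univ_succ]
    simp only [hF, Matrix.of_apply, Fin.cases_zero, Fin.cases_succ]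
    rw [Finset.sum_congr rfl (fun k _ => by
      rw [show C i k.succ * (if (k.succ : Fin (N+1)) = 0 then -1
          else if (k.succ : Fin (N+1)) = j.succ then 1 else 0)
        = if k = j then C i k.succ else 0 by
          rw [if_neg (Fin.succ_ne_zero k)]
          by_cases hk : k = j
          · subst hk; simp
          · rw [if_neg (by simp [Fin.succ_inj]; exact hk), if_neg hk, mul_zero]]),
      Finset.sum_ite_eq' Finset.univ j (fun k => C i k.succ)]
    simp
    ring
  have hmul0 : ∀ i, (C * F) i 0 = C i 0 := by
    intro i
    rw [Matrix.mul_apply, Fin.sum_univ_succ]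
    simp [hF, Fin.succ_ne_zero]
  have hCF : (C * F).det = C.det := by
    rw [Matrix.det_mul, hFdet, mul_one]
  rw [← hCF, Matrix.det_succ_row_zero]
  rw [Finset.sum_eq_single_of_mem 0 (Finset.mem_univ 0)]
  · rw [hmul0, h0]
    simp only [Fin.val_zero, pow_zero, one_mul]
    congr 1
    ext i j
    simp only [Matrix.submatrix_apply, Fin.succAbove_zero, Matrix.of_apply]
    rw [hmul]
  · intro j _ hj
    obtain ⟨j', rfl⟩ := Fin.exists_succ_eq.2 hj
    rw [hmul, h0, h0]
    ring

end Bordered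

section DopLemmas
variable {n : ℕ}

lemma Dop_apply (i : Fin n) (p : LP n) (m : Fin n → ℤ) :
    (Dop i p).coeff m = (m i : ℂ) * p.coeff m := by
  classical
  rw [Dop, AddMonoidAlgebra.coeff_finsuppSum, Finsupp.sum, Finsupp.finset_sum_apply]
  simp only [AddMonoidAlgebra.coeff_single]
  rw [Finset.sum_congr rfl (fun m' _ => Finsupp.single_apply (a := m') (a' := m))]
  rw [Finset.sum_ite_eq' p.coeff.support m (fun m' => (m' i : ℂ) * p.coeff m')]
  by_cases hm : m ∈ p.coeff.support
  · rw [if_pos hm]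
  · rw [if_neg hm, Finsupp.notMem_support_iff.1 hm, mul_zero]

lemma Dop_support (i : Fin n) (p : LP n) : (Dop i p).coeff.support ⊆ p.coeff.support := by
  intro m hm
  by_contra hmp
  apply Finsupp.mem_support_iff.1 hm
  rw [Dop_apply, Finsupp.notMem_support_iff.1 hmp, mul_zero]

lemma Dop_sum_eq (i : Fin n) (q : LP n) (S : Finset (Fin n → ℤ)) (hS : q.coeff.support ⊆ S) :
    Dop i q = ∑ m ∈ S, AddMonoidAlgebra.single m ((m i : ℂ) * q.coeff m) := by
  rw [Dop, Finsupp.sum]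
  apply Finset.sum_subset hS
  intro m _ hm
  rw [Finsupp.notMem_support_iff.1 hm, mul_zero, AddMonoidAlgebra.single_zero]

lemma sum_single_eq_self (q : LP n) (S : Finset (Fin n → ℤ)) (hS : q.coeff.support ⊆ S) :
    ∑ m ∈ S, AddMonoidAlgebra.single m (q.coeff m) = q := by
  conv_rhs => rw [← AddMonoidAlgebra.sum_coeff_single q, Finsupp.sum]
  symm
  apply Finset.sum_subset hS
  intro m _ hm
  rw [Finsupp.notMem_support_iff.1 hm]
  simp

end DopLemmas

/-- for a nonzero Laurent polynomial `p = Σ_j c_j χ^{m_j}`,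
`p^{n+1}·det(D²log p) = Σ_J (n!·vol(conv{m_j : j∈J}))²·Π_{j∈J} c_j χ^{m_j}`,
the sum running over all subsets `J` of the support of cardinality `n+1`,
where `vol` is the Lebesgue measure on `ℝ^n`. -/
theorem statement0 {n : ℕ} (p : LP n) (hp : p ≠ 0) :
    (algebraMap (LP n) (FractionRing (LP n)) p) ^ (n + 1) * deltaOp p =
      algebraMap (LP n) (FractionRing (LP n))
        (∑ J ∈ p.coeff.support.powersetCard (n + 1),
          (((n.factorial : ℝ) *
              (volume (convexHull ℝ (emb '' (J : Set (Fin n → ℤ))))).toReal) ^ 2 : ℝ) •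
            ∏ m ∈ J, AddMonoidAlgebra.single m (p.coeff m)) := by
  classical
  set U : Fin (n+1) → (Fin n → ℤ) → ℂ :=
    fun i m => Fin.cases (motive := fun _ => ℂ) 1 (fun i' => (m i' : ℂ)) i with hU
  set ZU : Fin (n+1) → (Fin n → ℤ) → ℤ :=
    fun i m => Fin.cases (motive := fun _ => ℤ) 1 (fun i' => m i') i with hZU
  set w : (Fin n → ℤ) → LP n := fun m => AddMonoidAlgebra.single m (p.coeff m) with hw
  set u : Fin (n+1) → (Fin n → ℤ) → LP n :=
    fun i m => AddMonoidAlgebra.single 0 (U i m) with hu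
  set Bm : Matrix (Fin (n+1)) (Fin (n+1)) (LP n) :=
    Matrix.of fun i j => ∑ m ∈ p.coeff.support, u i m * u j m * w m with hBm
  have hsingle3 : ∀ (i j : Fin (n+1)) (m : Fin n → ℤ),
      u i m * u j m * w m = AddMonoidAlgebra.single m (U i m * U j m * p.coeff m) := by
    intro i j m
    rw [hu, hw]
    simp only
    rw [AddMonoidAlgebra.single_mul_single, AddMonoidAlgebra.single_mul_single, zero_add,
      zero_add]
  have hU0 : ∀ m : Fin n → ℤ, U 0 m = 1 := fun m => rfl
  have hUs : ∀ (i : Fin n) (m : Fin n → ℤ), U i.succ m = (m i : ℂ) := fun i m => rfl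
  have hB00 : Bm 0 0 = p := by
    rw [hBm]
    simp only [Matrix.of_apply]
    rw [Finset.sum_congr rfl fun m _ => hsingle3 0 0 m]
    simp only [hU0, one_mul]
    exact sum_single_eq_self p _ (subset_refl _)
  have hB0j : ∀ j : Fin n, Bm 0 j.succ = Dop j p := by
    intro j
    rw [hBm]
    simp only [Matrix.of_apply]
    rw [Finset.sum_congr rfl fun m _ => hsingle3 0 j.succ m]
    simp only [hU0, hUs, one_mul]
    exact (Dop_sum_eq j p _ (subset_refl _)).symm
  have hBi0 : ∀ i : Fin n, Bm i.succ 0 = Dop i p := by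
    intro i
    rw [hBm]
    simp only [Matrix.of_apply]
    rw [Finset.sum_congr rfl fun m _ => hsingle3 i.succ 0 m]
    simp only [hU0, hUs, mul_one]
    exact (Dop_sum_eq i p _ (subset_refl _)).symm
  have hBij : ∀ i j : Fin n, Bm i.succ j.succ = Dop i (Dop j p) := by
    intro i j
    rw [hBm]
    simp only [Matrix.of_apply]
    rw [Finset.sum_congr rfl fun m _ => hsingle3 i.succ j.succ m]
    simp only [hUs]
    rw [Dop_sum_eq i (Dop j p) _ (Dop_support j p)]
    exact Finset.sum_congr rfl fun m _ => by rw [Dop_apply, mul_assoc]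
  have hP : algebraMap (LP n) (FractionRing (LP n)) p ≠ 0 := fun h =>
    hp ((IsFractionRing.to_map_eq_zero_iff (K := FractionRing (LP n))).1 h)
  have hdelta : deltaOp p = (((algebraMap (LP n) (FractionRing (LP n)) p) ^ 2)⁻¹) ^ n *
      (Matrix.of fun i j : Fin n => algebraMap (LP n) (FractionRing (LP n))
        (Dop i (Dop j p) * p - Dop i p * Dop j p)).det := by
    rw [deltaOp]
    have hsm : (fun i j : Fin n => algebraMap (LP n) (FractionRing (LP n))
          (Dop i (Dop j p) * p - Dop i p * Dop j p)
            / (algebraMap (LP n) (FractionRing (LP n)) p) ^ 2)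
        = ((algebraMap (LP n) (FractionRing (LP n)) p ^ 2)⁻¹ •
            (Matrix.of fun i j : Fin n => algebraMap (LP n) (FractionRing (LP n))
              (Dop i (Dop j p) * p - Dop i p * Dop j p)) : Matrix (Fin n) (Fin n) _) := by
      ext i j
      simp only [Matrix.smul_apply, Matrix.of_apply, smul_eq_mul]
      rw [div_eq_mul_inv, mul_comm]
    rw [hsm, Matrix.det_smul]
    simp [Fintype.card_fin]
  have hbord := bordered_row (Bm.map (algebraMap (LP n) (FractionRing (LP n))))
  rw [show (Bm.map (algebraMap (LP n) (FractionRing (LP n)))) 0 0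
      = algebraMap (LP n) (FractionRing (LP n)) p by rw [Matrix.map_apply, hB00]] at hbord
  rw [show (Matrix.of fun i j : Fin n =>
      algebraMap (LP n) (FractionRing (LP n)) p *
        (Bm.map (algebraMap (LP n) (FractionRing (LP n)))) i.succ j.succ -
      (Bm.map (algebraMap (LP n) (FractionRing (LP n)))) i.succ 0 *
        (Bm.map (algebraMap (LP n) (FractionRing (LP n)))) 0 j.succ)
      = Matrix.of fun i j : Fin n => algebraMap (LP n) (FractionRing (LP n))
          (Dop i (Dop j p) * p - Dop i p * Dop j p) from by
    ext i j
    simp only [Matrix.of_apply, Matrix.map_apply]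
    rw [hB0j j, hBi0 i, hBij i j, ← map_mul, ← map_mul, ← map_sub]
    congr 1
    ring] at hbord
  have hdm : (Bm.map (algebraMap (LP n) (FractionRing (LP n)))).det
      = algebraMap (LP n) (FractionRing (LP n)) Bm.det :=
    (RingHom.map_det (algebraMap (LP n) (FractionRing (LP n))) Bm).symm
  rw [hdm] at hbord
  -- per-J term identification
  have hterm : ∀ J ∈ p.coeff.support.powersetCard (n + 1),
      (((n.factorial : ℝ) *
          (volume (convexHull ℝ (emb '' (J : Set (Fin n → ℤ))))).toReal) ^ 2 : ℝ) •
        ∏ m ∈ J, AddMonoidAlgebra.single m (p.coeff m)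
      = (Matrix.of fun i j : Fin (n+1) => u i (enumOf J j)).det ^ 2 * ∏ m ∈ J, w m := by
    intro J hJ
    have hcard : J.card = n + 1 := (Finset.mem_powersetCard.1 hJ).2
    set d : ℤ := (Matrix.of fun i j : Fin (n+1) => ZU i (enumOf J j)).det with hd
    have hsetJ : emb '' (J : Set (Fin n → ℤ))
        = Set.range (fun i : Fin (n+1) => emb (enumOf J i)) := by
      ext x
      constructor
      · rintro ⟨m, hm, rfl⟩
        obtain ⟨i, rfl⟩ := enumOf_surj hcard (Finset.mem_coe.1 hm)
        exact ⟨i, rfl⟩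
      · rintro ⟨i, rfl⟩
        exact ⟨enumOf J i, Finset.mem_coe.2 (enumOf_mem hcard i), rfl⟩
    have hvol := volume_convexHull_range (fun i : Fin (n+1) => emb (enumOf J i))
    have hdiff_det : (Matrix.of fun i j : Fin n =>
        emb (enumOf J (j.succ)) i - emb (enumOf J ((0 : Fin (n+1)))) i).det
        = (((Matrix.of fun i j : Fin n =>
            enumOf J (j.succ) i - enumOf J ((0 : Fin (n+1))) i).det : ℤ) : ℝ) := by
      rw [show (Matrix.of fun i j : Fin n =>
          emb (enumOf J (j.succ)) i - emb (enumOf J ((0 : Fin (n+1)))) i)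
          = (Matrix.of fun i j : Fin n =>
              enumOf J (j.succ) i - enumOf J ((0 : Fin (n+1))) i).map (Int.castRingHom ℝ) from by
        ext i j
        simp only [Matrix.of_apply, Matrix.map_apply, Int.coe_castRingHom, emb]
        push_cast
        ring]
      exact (RingHom.map_det (Int.castRingHom ℝ) _).symm
    have hZint : (Matrix.of fun i j : Fin n =>
        enumOf J (j.succ) i - enumOf J ((0 : Fin (n+1))) i).det = d := by
      rw [hd]
      rw [bordered_col_ones (Matrix.of fun i j : Fin (n+1) => ZU i (enumOf J j))
        (fun j => by rw [hZU]; simp only [Matrix.of_apply, Fin.cases_zero])]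
      congr 1
    have hcoefR : (((n.factorial : ℝ) *
        (volume (convexHull ℝ (emb '' (J : Set (Fin n → ℤ))))).toReal) ^ 2 : ℝ)
        = ((d : ℝ)) ^ 2 := by
      rw [hsetJ, hvol, ENNReal.toReal_ofReal (by positivity), hdiff_det, hZint, mul_comm,
        div_mul_cancel₀ _ (by positivity : (n.factorial : ℝ) ≠ 0), sq_abs]
    have hudet : (Matrix.of fun i j : Fin (n+1) => u i (enumOf J j)).det
        = algebraMap ℂ (LP n) ((d : ℂ)) := by
      rw [show (Matrix.of fun i j : Fin (n+1) => u i (enumOf J j))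
          = (Matrix.of fun i j : Fin (n+1) => ZU i (enumOf J j)).map
              ((algebraMap ℂ (LP n)).comp (Int.castRingHom ℂ)) from by
        ext i j
        simp only [Matrix.of_apply, Matrix.map_apply, RingHom.comp_apply, Int.coe_castRingHom]
        rw [hu]
        simp only
        rw [show U i (enumOf J j) = ((ZU i (enumOf J j) : ℤ) : ℂ) from by
          rw [hU, hZU]
          induction i using Fin.cases with
          | zero => simp
          | succ i' => simp]
        rw [AddMonoidAlgebra.coe_algebraMap]
        simp]
      have hmapd : ((Matrix.of fun i j : Fin (n+1) => ZU i (enumOf J j)).map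
          ⇑((algebraMap ℂ (LP n)).comp (Int.castRingHom ℂ))).det
          = ((algebraMap ℂ (LP n)).comp (Int.castRingHom ℂ))
              (Matrix.of fun i j : Fin (n+1) => ZU i (enumOf J j)).det :=
        (RingHom.map_det ((algebraMap ℂ (LP n)).comp (Int.castRingHom ℂ))
          (Matrix.of fun i j : Fin (n+1) => ZU i (enumOf J j))).symm
      rw [hmapd, hd]
      rfl
    rw [hcoefR, hudet]
    rw [show ((d : ℝ)) ^ 2 • (∏ m ∈ J, AddMonoidAlgebra.single m (p.coeff m))
        = ((d ^ 2 : ℤ) : ℝ) • (∏ m ∈ J, w m) from by push_cast; rw [hw]]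
    rw [Int.cast_smul_eq_zsmul, ← Int.cast_smul_eq_zsmul ℂ, Algebra.smul_def]
    rw [show ((d ^ 2 : ℤ) : ℂ) = ((d : ℂ)) ^ 2 from by push_cast; ring, map_pow]
  have hBdet : Bm.det = ∑ J ∈ p.coeff.support.powersetCard (n + 1),
      (((n.factorial : ℝ) *
          (volume (convexHull ℝ (emb '' (J : Set (Fin n → ℤ))))).toReal) ^ 2 : ℝ) •
        ∏ m ∈ J, AddMonoidAlgebra.single m (p.coeff m) := by
    have hexp := det_expand (R := LP n) p.coeff.support w u
    rw [hBm]
    rw [hexp]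
    exact (Finset.sum_congr rfl hterm).symm
  rw [hdelta, ← hBdet]
  apply mul_left_cancel₀ (pow_ne_zero n hP)
  rw [hbord]
  generalize (Matrix.of fun i j : Fin n => algebraMap (LP n) (FractionRing (LP n))
    (Dop i (Dop j p) * p - Dop i p * Dop j p)).det = D
  set P := algebraMap (LP n) (FractionRing (LP n)) p with hPdef
  rw [show P ^ n * (P ^ (n + 1) * ((P ^ 2)⁻¹ ^ n * D)) = P * D * (P ^ 2 * (P ^ 2)⁻¹) ^ n by ring,
    mul_inv_cancel₀ (pow_ne_zero 2 hP), one_pow, mul_one]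


end
end

section
/- For p_FS = 1 + x_1 + ⋯ + x_n ∈ ℂ[x_1^{±1},…,x_n^{±1}], one has δ(p_FS) = (x_1⋯x_n)·p_FS^{−(n+1)}. -/
noncomputable section

lemma Dop_single {n : ℕ} (i : Fin n) (m : Fin n → ℤ) (c : ℂ) :
    Dop i (AddMonoidAlgebra.single m c) = AddMonoidAlgebra.single m ((m i : ℂ) * c) :=
  Finsupp.sum_single_index (by simp)

lemma Dop_add {n : ℕ} (i : Fin n) (p q : LP n) :
    Dop i (p + q) = Dop i p + Dop i q :=
  Finsupp.sum_add_index (by simp) (by intros; simp [mul_add, Finsupp.single_add])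

lemma Dop_sum {n : ℕ} (i : Fin n) {α : Type*} (s : Finset α) (f : α → LP n) :
    Dop i (∑ k ∈ s, f k) = ∑ k ∈ s, Dop i (f k) :=
  map_sum (AddMonoidHom.mk' (Dop i) (Dop_add i)) f s

lemma Dop_one {n : ℕ} (i : Fin n) : Dop i (1 : LP n) = 0 := by
  rw [AddMonoidAlgebra.one_def, Dop_single]; simp

def pFS (n : ℕ) : LP n := 1 + ∑ i : Fin n, AddMonoidAlgebra.single (Pi.single i 1) (1 : ℂ)

lemma Dop_pFS {n : ℕ} (j : Fin n) :
    Dop j (pFS n) = AddMonoidAlgebra.single (Pi.single j 1) (1 : ℂ) := by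
  rw [pFS, Dop_add, Dop_one, Dop_sum, zero_add]
  rw [Finset.sum_eq_single j]
  · rw [Dop_single]; simp
  · intro k _ hk
    rw [Dop_single, Pi.single_apply]
    simp [hk, Ne.symm hk]
  · simp

lemma Dop_Dop_pFS {n : ℕ} (i j : Fin n) :
    Dop i (Dop j (pFS n)) =
      if i = j then AddMonoidAlgebra.single (Pi.single j 1) (1 : ℂ) else 0 := by
  rw [Dop_pFS, Dop_single, Pi.single_apply]
  by_cases h : i = j <;> simp [h]

lemma pFS_ne_zero {n : ℕ} : pFS n ≠ 0 := by
  intro h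
  have : (pFS n).coeff 0 = 1 := by
    rw [pFS]
    rw [AddMonoidAlgebra.coeff_add, AddMonoidAlgebra.coeff_sum, Finsupp.add_apply, Finsupp.finset_sum_apply]
    have h1 : (1 : LP n).coeff 0 = 1 := by
      rw [AddMonoidAlgebra.one_def]; simp
    rw [h1]
    have : ∀ k : Fin n, (AddMonoidAlgebra.single (Pi.single k 1) (1 : ℂ)).coeff (0 : Fin n → ℤ) = 0 := by
      intro k
      rw [AddMonoidAlgebra.coeff_single, Finsupp.single_apply, if_neg]
      intro hk
      have := congrFun hk k
      simp at this
    simp [this]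
  rw [h] at this
  simp at this

set_option maxHeartbeats 1000000 in
set_option synthInstance.maxHeartbeats 200000 in
open Matrix in
theorem main {n : ℕ} :
    deltaOp (pFS n) =
      algebraMap (LP n) (FractionRing (LP n))
          (∏ i : Fin n, AddMonoidAlgebra.single (Pi.single i 1) (1 : ℂ)) /
        (algebraMap (LP n) (FractionRing (LP n)) (pFS n)) ^ (n + 1) := by
  classical
  set φ := algebraMap (LP n) (FractionRing (LP n)) with hφ
  set P : FractionRing (LP n) := φ (pFS n) with hPdef
  set X : Fin n → FractionRing (LP n) := fun i => φ (AddMonoidAlgebra.single (Pi.single i 1) (1 : ℂ)) with hX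
  have hP : P ≠ 0 := by
    rw [hPdef]
    exact fun h => pFS_ne_zero ((map_eq_zero_iff φ (IsFractionRing.injective _ _)).mp h)
  have hPsum : P = 1 + ∑ i : Fin n, X i := by
    simp only [hPdef, pFS, map_add, map_sum, _root_.map_one]
    rfl
  have hM : (fun i j : Fin n => φ (Dop i (Dop j (pFS n)) * pFS n - Dop i (pFS n) * Dop j (pFS n)) /
        (φ (pFS n)) ^ 2)
      = (((P ^ 2)⁻¹ • (Matrix.diagonal X *
          (P • ((1 : Matrix (Fin n) (Fin n) (FractionRing (LP n))) +
            Matrix.replicateCol Unit (fun _ => -P⁻¹) * Matrix.replicateRow Unit X)))) :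
          Matrix (Fin n) (Fin n) (FractionRing (LP n))) := by
    funext i j
    have hcr : (Matrix.replicateCol Unit (fun _ : Fin n => -P⁻¹) * Matrix.replicateRow Unit X) i j = -P⁻¹ * X j := by
      rw [Matrix.mul_apply]
      simp
    simp only [Matrix.smul_apply, Matrix.diagonal_mul, hcr, Matrix.add_apply,
      Matrix.one_apply, smul_eq_mul]
    rw [Dop_Dop_pFS, Dop_pFS i, Dop_pFS j, map_sub, _root_.map_mul, _root_.map_mul, apply_ite φ, map_zero]
    simp only [show ∀ k, φ (AddMonoidAlgebra.single (Pi.single k 1) (1:ℂ)) = X k from fun _ => rfl]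
    by_cases h : i = j
    · subst h
      simp only [if_pos rfl, ↓reduceIte, ← hPdef]
      field_simp
      ring
    · simp only [if_neg h, ← hPdef]
      field_simp
      ring
  rw [deltaOp, hM]
  rw [Matrix.det_smul, Matrix.det_mul, Matrix.det_diagonal, Matrix.det_smul,
    Matrix.det_one_add_replicateCol_mul_replicateRow]
  have hdot : X ⬝ᵥ (fun _ => -P⁻¹) = -((∑ i : Fin n, X i) * P⁻¹) := by
    simp [dotProduct, Finset.sum_mul]
  rw [hdot]
  have hsum : ∑ i : Fin n, X i = P - 1 := by rw [hPsum]; ring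
  rw [hsum, map_prod]
  have hXr : ∀ i, φ (AddMonoidAlgebra.single (Pi.single i 1) (1 : ℂ)) = X i := fun i => rfl
  simp only [hXr, Fintype.card_fin]
  field_simp
  have hPn : (1 / P ^ 2) ^ n * P ^ n * P ^ (n + 1) = P := by
    rw [div_pow, one_pow, ← pow_mul]
    field_simp
    ring
  linear_combination (∏ i, X i) * hPn

/-- for `p_FS = 1 + x_1 + ⋯ + x_n`, one has
`δ(p_FS) = (x_1⋯x_n)·p_FS^{-(n+1)}`. -/
theorem statement5 {n : ℕ} :
    deltaOp ((1 : LP n) + ∑ i : Fin n, AddMonoidAlgebra.single (Pi.single i 1) (1 : ℂ)) =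
      algebraMap (LP n) (FractionRing (LP n))
          (∏ i : Fin n, AddMonoidAlgebra.single (Pi.single i 1) (1 : ℂ)) /
        (algebraMap (LP n) (FractionRing (LP n))
            ((1 : LP n) + ∑ i : Fin n, AddMonoidAlgebra.single (Pi.single i 1) (1 : ℂ))) ^
          (n + 1) := main

end
end

section
/- Let p ∈ ℂ[x_1^{±1},…,x_n^{±1}] have unimodular support. If NP(p) is a reflexive polytope then NP(μ(p)) = n·NP(p). -/
open MeasureTheory
open scoped Pointwise

noncomputable section

/-- The pairing `⟨u, x⟩ = Σ_i u_i x_i` on `ℝ^n`. -/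
def pairR {n : ℕ} (u x : Fin n → ℝ) : ℝ := ∑ i, u i * x i

/-- The Newton polytope of a Laurent polynomial: the convex hull of its
support. -/
def NP {n : ℕ} (p : LP n) : Set (Fin n → ℝ) :=
  convexHull ℝ (emb '' (p.coeff.support : Set (Fin n → ℤ)))

/-- The subset `C_σ` of points of `C` of minimal weight in the direction of a
cone (or any set) `σ`: `C_σ = {y ∈ C ∣ ⟨u, x−y⟩ ≥ 0 for all u ∈ σ, x ∈ C}`.
For a polytope `C` this is the face of `C` in the direction of `σ`. -/
def faceIn {n : ℕ} (σ : Set (Fin n → ℝ)) (C : Set (Fin n → ℝ)) : Set (Fin n → ℝ) :=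
  {y ∈ C | ∀ u ∈ σ, ∀ x ∈ C, pairR u y ≤ pairR u x}

/-- The normal cone `σ_v` of a polytope `Δ` at a point `v`. -/
def normalCone {n : ℕ} (Δ : Set (Fin n → ℝ)) (v : Fin n → ℝ) : Set (Fin n → ℝ) :=
  {u | ∀ x ∈ Δ, pairR u v ≤ pairR u x}

/-- An edge of a polytope: an exposed face whose affine span has dimension 1. -/
def IsEdgeOf {n : ℕ} (Δ E : Set (Fin n → ℝ)) : Prop :=
  IsExposed ℝ Δ E ∧ Module.finrank ℝ (affineSpan ℝ E).direction = 1

/-- A Laurent polynomial has unimodular support if for every vertex `v` of its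
Newton polytope there is a choice, for every edge `E` of the Newton polytope
containing `v`, of a point `w_E` of the support lying on `E` such that the
vectors `w_E − v` form a basis of the lattice `ℤ^n`. -/
def UnimodularSupport {n : ℕ} (p : LP n) : Prop :=
  ∀ v : Fin n → ℤ, emb v ∈ Set.extremePoints ℝ (NP p) →
    ∃ w : {E : Set (Fin n → ℝ) // IsEdgeOf (NP p) E ∧ emb v ∈ E} → (Fin n → ℤ),
      (∀ E, w E ∈ p.coeff.support ∧ emb (w E) ∈ E.1) ∧
      LinearIndependent ℤ (fun E => w E - v) ∧
      Submodule.span ℤ (Set.range fun E => w E - v) = ⊤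

/-- The Monge–Ampère polynomial
`μ(p) = p^{n+1}·δ(p) = Σ_J (n!·vol(conv{m_j : j∈J}))²·Π_{j∈J} c_j χ^{m_j}`,
the sum running over the subsets `J` of the support of `p` of cardinality
`n+1`, where `vol` is the Lebesgue measure on `ℝ^n`. -/
def muPoly {n : ℕ} (p : LP n) : LP n :=
  ∑ J ∈ p.coeff.support.powersetCard (n + 1),
    (((n.factorial : ℝ) *
        (volume (convexHull ℝ (emb '' (J : Set (Fin n → ℤ))))).toReal) ^ 2 : ℝ) •
      ∏ m ∈ J, AddMonoidAlgebra.single m (p.coeff m)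

open scoped Classical in
/-- The restriction `p|_S` of a Laurent polynomial to a subset `S ⊆ ℝ^n`: the
sum of the terms of `p` whose exponents lie in `S`. -/
def restrictTo {n : ℕ} (p : LP n) (S : Set (Fin n → ℝ)) : LP n :=
  ∑ m ∈ p.coeff.support, if emb m ∈ S then AddMonoidAlgebra.single m (p.coeff m) else 0

/-- A lattice vector is primitive if the gcd of its coordinates is `1`. -/
def IsPrimitive {n : ℕ} (u : Fin n → ℤ) : Prop := Finset.univ.gcd u = 1

/-- The adjacent polytope of a face `F` of `Δ` with primitive inner normal
vector `u`: the set `{x ∈ Δ ∣ ⟨u, x−y⟩ = 1 for all y ∈ F}`, i.e. the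
intersection of `Δ` with the inner parallel lattice hyperplane closest
to `F`. -/
def adjacentPolytope {n : ℕ} (Δ F : Set (Fin n → ℝ)) (u : Fin n → ℝ) :
    Set (Fin n → ℝ) :=
  {x ∈ Δ | ∀ y ∈ F, pairR u x - pairR u y = 1}

/-- The lattice length of a lattice segment: the number of lattice points on
it minus `1`. -/
def latLen {n : ℕ} (S : Set (Fin n → ℝ)) : ℕ :=
  {m : Fin n → ℤ | emb m ∈ S}.ncard - 1

namespace S11
variable {n : ℕ}

def zpair (u m : Fin n → ℤ) : ℤ := ∑ i, u i * m i

lemma emb_add (a b : Fin n → ℤ) : emb (a + b) = emb a + emb b := by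
  funext i; simp [emb]
lemma emb_sub (a b : Fin n → ℤ) : emb (a - b) = emb a - emb b := by
  funext i; simp [emb]
lemma emb_zero : emb (0 : Fin n → ℤ) = 0 := by funext i; simp [emb]
lemma emb_neg (a : Fin n → ℤ) : emb (-a) = - emb a := by funext i; simp [emb]
lemma emb_nsmul (k : ℕ) (a : Fin n → ℤ) : emb (k • a) = (k : ℝ) • emb a := by
  funext i; simp [emb]
lemma emb_zsmul (c : ℤ) (a : Fin n → ℤ) : emb (c • a) = (c : ℝ) • emb a := by
  funext i; simp [emb]

lemma emb_natCast_smul (k : ℕ) (a : Fin n → ℤ) : emb ((k : ℤ) • a) = (k : ℝ) • emb a := by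
  rw [emb_zsmul]; norm_num

lemma emb_injective : Function.Injective (emb (n := n)) := by
  intro a b h
  funext i
  have := congrFun h i
  simpa [emb] using this

lemma pairR_emb (u m : Fin n → ℤ) : pairR (emb u) (emb m) = (zpair u m : ℝ) := by
  simp [pairR, zpair, emb]

/-- pairing as a continuous linear map in the second variable -/
def pairCLM (u : Fin n → ℝ) : (Fin n → ℝ) →L[ℝ] ℝ :=
  LinearMap.toContinuousLinearMap
    { toFun := fun x => pairR u x
      map_add' := by intro x y; simp [pairR, mul_add, Finset.sum_add_distrib]
      map_smul' := by
        intro c x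
        simp [pairR, Finset.mul_sum]
        congr 1; funext i; ring }

@[simp] lemma pairCLM_apply (u x : Fin n → ℝ) : pairCLM u x = pairR u x := rfl

lemma pairR_add_right (u x y : Fin n → ℝ) : pairR u (x + y) = pairR u x + pairR u y :=
  (pairCLM u).map_add x y
lemma pairR_sub_right (u x y : Fin n → ℝ) : pairR u (x - y) = pairR u x - pairR u y :=
  (pairCLM u).map_sub x y
lemma pairR_smul_right (u : Fin n → ℝ) (c : ℝ) (x : Fin n → ℝ) :
    pairR u (c • x) = c * pairR u x := (pairCLM u).map_smul c x
lemma pairR_zero_right (u : Fin n → ℝ) : pairR u 0 = 0 := (pairCLM u).map_zero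

lemma pairR_sum_left {α : Type*} (s : Finset α) (f : α → (Fin n → ℝ)) (x : Fin n → ℝ) :
    pairR (∑ a ∈ s, f a) x = ∑ a ∈ s, pairR (f a) x := by
  simp only [pairR, Finset.sum_apply, Finset.sum_mul]
  rw [Finset.sum_comm]

section Hull
variable {E : Type*} [NormedAddCommGroup E] [NormedSpace ℝ E]

/-- Minkowski: the convex hull of a finite set equals the convex hull of its extreme points. -/
lemma finite_convexHull_extremePoints {T : Set E} (hT : T.Finite) :
    convexHull ℝ T = convexHull ℝ ((convexHull ℝ T).extremePoints ℝ) := by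
  have hcomp : IsCompact (convexHull ℝ T) := hT.isCompact_convexHull ℝ
  have hext : ((convexHull ℝ T).extremePoints ℝ).Finite :=
    hT.subset extremePoints_convexHull_subset
  have := closure_convexHull_extremePoints hcomp (convex_convexHull ℝ T)
  rw [IsClosed.closure_eq ((hext.isCompact_convexHull ℝ).isClosed)] at this
  exact this.symm

/-- An extreme point of the hull of `T` is not in the hull of `T` minus itself. -/
lemma extremePoint_not_mem_convexHull_diff {T : Set E} {q : E}
    (hq : q ∈ (convexHull ℝ T).extremePoints ℝ) : q ∉ convexHull ℝ (T \ {q}) := by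
  intro hmem
  have hsub : convexHull ℝ (T \ {q}) ⊆ convexHull ℝ T := convexHull_mono Set.diff_subset
  have hq' : q ∈ (convexHull ℝ (T \ {q})).extremePoints ℝ := by
    refine ⟨hmem, fun x hx y hy hxy => hq.2 (hsub hx) (hsub hy) hxy⟩
  have := extremePoints_convexHull_subset hq'
  exact this.2 rfl

/-- Strictly exposing functional for an extreme point of a finite hull. -/
lemma exists_exposing_extremePoint [FiniteDimensional ℝ E] {T : Set E} (hT : T.Finite) {q : E}
    (hq : q ∈ (convexHull ℝ T).extremePoints ℝ) :
    ∃ f : E →L[ℝ] ℝ, ∀ t ∈ T, t ≠ q → f t < f q := by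
  have hnot := extremePoint_not_mem_convexHull_diff hq
  have hcl : IsClosed (convexHull ℝ (T \ {q})) :=
    ((hT.subset Set.diff_subset).isCompact_convexHull ℝ).isClosed
  obtain ⟨f, c, hc1, hc2⟩ :=
    geometric_hahn_banach_closed_point (convex_convexHull ℝ _) hcl hnot
  refine ⟨f, fun t ht htq => ?_⟩
  have h1 : f t < c := hc1 t (subset_convexHull ℝ _ ⟨ht, htq⟩)
  linarith

end Hull
section NPl
variable {n : ℕ} {p : LP n} {ι : Type} [Fintype ι] {u : ι → Fin n → ℤ}

lemma NP_convex : Convex ℝ (NP p) := convex_convexHull ℝ _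

lemma mem_NP_of_supp {m : Fin n → ℤ} (hm : m ∈ p.coeff.support) : emb m ∈ NP p :=
  subset_convexHull ℝ _ ⟨m, hm, rfl⟩

lemma pair_le_on_hull {T : Set (Fin n → ℝ)} (g : (Fin n → ℝ) →L[ℝ] ℝ) {c : ℝ}
    (h : ∀ t ∈ T, g t ≤ c) : ∀ x ∈ convexHull ℝ T, g x ≤ c := fun x hx =>
  convexHull_min h (convex_halfSpace_le (g : (Fin n → ℝ) →ₗ[ℝ] ℝ).isLinear c) hx

lemma pair_ge_on_hull {T : Set (Fin n → ℝ)} (g : (Fin n → ℝ) →L[ℝ] ℝ) {c : ℝ}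
    (h : ∀ t ∈ T, c ≤ g t) : ∀ x ∈ convexHull ℝ T, c ≤ g x := fun x hx =>
  convexHull_min h (convex_halfSpace_ge (g : (Fin n → ℝ) →ₗ[ℝ] ℝ).isLinear c) hx

lemma exists_eps_mem (hNP : NP p = {x | ∀ k, -(1:ℝ) ≤ pairR (emb (u k)) x})
    {x₀ q : Fin n → ℝ} (hx₀ : x₀ ∈ NP p)
    (hq : ∀ k, pairR (emb (u k)) x₀ = -1 → 0 ≤ pairR (emb (u k)) q) :
    ∃ ε : ℝ, 0 < ε ∧ x₀ + ε • q ∈ NP p := by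
  classical
  have hx₀' : ∀ k, -(1:ℝ) ≤ pairR (emb (u k)) x₀ := by rw [hNP] at hx₀; exact hx₀
  set F : ι → ℝ := fun k => if pairR (emb (u k)) q < 0
      then (pairR (emb (u k)) x₀ + 1) / (-(pairR (emb (u k)) q)) else 1 with hF
  have hnum : ∀ k, pairR (emb (u k)) q < 0 → 0 < pairR (emb (u k)) x₀ + 1 := by
    intro k hneg
    rcases eq_or_lt_of_le (hx₀' k) with h | h
    · exact absurd (hq k h.symm) (not_le.mpr hneg)
    · linarith
  have hFpos : ∀ k, 0 < F k := by
    intro k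
    by_cases hneg : pairR (emb (u k)) q < 0
    · simp only [hF, if_pos hneg]
      exact div_pos (hnum k hneg) (by linarith)
    · simp only [hF, if_neg hneg]; norm_num
  have hsne : (insert (1:ℝ) (Finset.univ.image F)).Nonempty := ⟨1, Finset.mem_insert_self _ _⟩
  set ε := (insert (1:ℝ) (Finset.univ.image F)).min' hsne with hε
  have hεpos : 0 < ε := by
    have hmem := (insert (1:ℝ) (Finset.univ.image F)).min'_mem hsne
    rcases Finset.mem_insert.mp hmem with h | h
    · rw [hε, h]; norm_num
    · obtain ⟨k, _, hk⟩ := Finset.mem_image.mp h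
      rw [hε, ← hk]; exact hFpos k
  have hεle : ∀ k, ε ≤ F k := fun k =>
    Finset.min'_le _ _ (Finset.mem_insert_of_mem (Finset.mem_image_of_mem F (Finset.mem_univ k)))
  refine ⟨ε, hεpos, ?_⟩
  rw [hNP]
  intro k
  rw [pairR_add_right, pairR_smul_right]
  rcases lt_or_ge (pairR (emb (u k)) q) 0 with hneg | hpos
  · have h1 := hεle k
    rw [hF] at h1
    simp only [if_pos hneg] at h1
    rw [le_div_iff₀ (by linarith : (0:ℝ) < -(pairR (emb (u k)) q))] at h1
    nlinarith [hx₀' k]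
  · nlinarith [hx₀' k, mul_nonneg hεpos.le hpos]

end NPl
section Vertex
variable {n : ℕ} {p : LP n} {ι : Type} [Fintype ι] {u : ι → Fin n → ℤ}
variable {v : Fin n → ℤ} {b : Module.Basis (Fin n) ℤ (Fin n → ℤ)}

/-- the integer vector representing the `i`-th dual basis functional -/
def beta (b : Module.Basis (Fin n) ℤ (Fin n → ℤ)) (i : Fin n) : Fin n → ℤ :=
  fun j => b.repr (Pi.single j 1) i

lemma zpair_beta (b : Module.Basis (Fin n) ℤ (Fin n → ℤ)) (i : Fin n) (x : Fin n → ℤ) :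
    zpair (beta b i) x = b.repr x i := by
  have hx : x = ∑ j, x j • Pi.single j (1:ℤ) := by
    funext a
    simp [Pi.single_apply, Finset.sum_apply]
  calc zpair (beta b i) x = ∑ j, x j * b.repr (Pi.single j 1) i := by
        simp [zpair, beta, mul_comm]
    _ = b.repr (∑ j, x j • Pi.single j (1:ℤ)) i := by
        rw [map_sum, Finsupp.finset_sum_apply]
        refine Finset.sum_congr rfl fun j _ => ?_
        rw [LinearEquiv.map_smul, Finsupp.smul_apply, smul_eq_mul]
    _ = b.repr x i := by rw [← hx]

lemma coord_emb (b : Module.Basis (Fin n) ℤ (Fin n → ℤ)) (i : Fin n) (x : Fin n → ℤ) :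
    pairCLM (emb (beta b i)) (emb x) = (b.repr x i : ℝ) := by
  rw [pairCLM_apply, pairR_emb, zpair_beta]

set_option maxHeartbeats 1000000 in
/-- The main geometric lemma: all support points lie in the basis cone at `v`. -/
lemma repr_nonneg
    (hNP : NP p = {x | ∀ k, -(1:ℝ) ≤ pairR (emb (u k)) x})
    (hvsupp : v ∈ p.coeff.support)
    (hvext : emb v ∈ Set.extremePoints ℝ (NP p))
    (hedge : ∀ E : Set (Fin n → ℝ), IsEdgeOf (NP p) E → emb v ∈ E →
       ∃ i : Fin n, emb (v + b i) ∈ E)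
    {m : Fin n → ℤ} (hm : m ∈ p.coeff.support) (i : Fin n) :
    0 ≤ b.repr (m - v) i := by
  classical
  set K : Set (Fin n → ℝ) :=
    {q | ∀ k, pairR (emb (u k)) (emb v) = -1 → 0 ≤ pairR (emb (u k)) q} with hK
  have hKsmul : ∀ (c : ℝ), 0 ≤ c → ∀ q ∈ K, c • q ∈ K := by
    intro c hc q hq k hk
    rw [pairR_smul_right]
    exact mul_nonneg hc (hq k hk)
  have hKpointed : ∀ q ∈ K, -q ∈ K → q = 0 := by
    intro q hq hnq
    obtain ⟨ε₁, hε₁, h1⟩ := exists_eps_mem hNP (mem_NP_of_supp hvsupp) hq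
    obtain ⟨ε₂, hε₂, h2⟩ := exists_eps_mem hNP (mem_NP_of_supp hvsupp) hnq
    by_contra hq0
    have hseg : emb v ∈ openSegment ℝ (emb v + ε₁ • q) (emb v + ε₂ • (-q)) := by
      refine ⟨ε₂ / (ε₁ + ε₂), ε₁ / (ε₁ + ε₂), by positivity, by positivity, ?_, ?_⟩
      · field_simp
        ring
      · have hs : ε₁ + ε₂ ≠ 0 := by positivity
        match_scalars <;> field_simp <;> ring
    have := (hvext.2 h1 h2 hseg)
    have hq' : ε₁ • q = 0 := by
      have := congrArg (fun z => z - emb v) this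
      simpa using this
    exact hq0 (by simpa [hε₁.ne'] using smul_eq_zero.mp hq')
  set A : Finset ι := Finset.univ.filter (fun k => pairR (emb (u k)) (emb v) = -1) with hA
  set Lvec : Fin n → ℝ := ∑ k ∈ A, emb (u k) with hLvec
  have hLapply : ∀ x, pairCLM Lvec x = ∑ k ∈ A, pairR (emb (u k)) x := by
    intro x; rw [pairCLM_apply, hLvec, pairR_sum_left]
  have hLK : ∀ q ∈ K, 0 ≤ pairCLM Lvec q := by
    intro q hq
    rw [hLapply]
    refine Finset.sum_nonneg fun k hk => hq k ?_
    exact (Finset.mem_filter.mp hk).2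
  have hLpos : ∀ q ∈ K, q ≠ 0 → 0 < pairCLM Lvec q := by
    intro q hq hq0
    rcases (hLK q hq).lt_or_eq with h | h
    · exact h
    · exfalso
      have hz : ∀ k ∈ A, pairR (emb (u k)) q = 0 := by
        have := (Finset.sum_eq_zero_iff_of_nonneg (fun k hk =>
          hq k (Finset.mem_filter.mp hk).2)).mp (by rw [← hLapply, ← h])
        exact this
      have hnq : -q ∈ K := by
        intro k hk
        have : pairR (emb (u k)) q = 0 :=
          hz k (Finset.mem_filter.mpr ⟨Finset.mem_univ k, hk⟩)
        rw [show -q = (-1 : ℝ) • q by simp, pairR_smul_right, this]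
        simp
      exact hq0 (hKpointed q hq hnq)
  have hmemK : ∀ m' ∈ p.coeff.support, emb m' - emb v ∈ K := by
    intro m' hm' k hk
    rw [pairR_sub_right, hk]
    have : -(1:ℝ) ≤ pairR (emb (u k)) (emb m') := by
      have := mem_NP_of_supp hm'
      rw [hNP] at this
      exact this k
    linarith
  set S₀ : Finset (Fin n → ℤ) := p.coeff.support.filter (fun m' => m' ≠ v) with hS₀
  set T : Set (Fin n → ℝ) :=
    (fun m' => (pairCLM Lvec (emb m' - emb v))⁻¹ • (emb m' - emb v)) '' (S₀ : Set (Fin n → ℤ))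
    with hT
  have hS₀K : ∀ m' ∈ S₀, emb m' - emb v ∈ K ∧ emb m' - emb v ≠ 0 ∧
      0 < pairCLM Lvec (emb m' - emb v) := by
    intro m' hm'
    obtain ⟨hm'supp, hm'v⟩ := Finset.mem_filter.mp hm'
    have h1 : emb m' - emb v ∈ K := hmemK m' hm'supp
    have h2 : emb m' - emb v ≠ 0 := by
      rw [sub_ne_zero]
      exact fun h => hm'v (emb_injective h)
    exact ⟨h1, h2, hLpos _ h1 h2⟩
  have hTK : ∀ x ∈ T, x ∈ K ∧ x ≠ 0 ∧ pairCLM Lvec x = 1 := by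
    rintro x ⟨m', hm', rfl⟩
    obtain ⟨h1, h2, h3⟩ := hS₀K m' hm'
    refine ⟨hKsmul _ (by positivity) _ h1, ?_, ?_⟩
    · simp only [ne_eq, smul_eq_zero, inv_eq_zero, not_or]
      exact ⟨h3.ne', h2⟩
    · rw [ContinuousLinearMap.map_smul, smul_eq_mul]
      exact inv_mul_cancel₀ h3.ne'
  have hTfin : T.Finite := (S₀.finite_toSet).image _
  -- the key claim about extreme points of the hull of T
  have hExt : ∀ q ∈ (convexHull ℝ T).extremePoints ℝ, 0 ≤ pairCLM (emb (beta b i)) q := by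
    intro q hqext
    have hqT : q ∈ T := extremePoints_convexHull_subset hqext
    obtain ⟨hqK, hq0, hLq⟩ := hTK q hqT
    obtain ⟨f, hf⟩ := exists_exposing_extremePoint hTfin hqext
    set g : (Fin n → ℝ) →L[ℝ] ℝ := f - (f q) • (pairCLM Lvec) with hg
    have hgq : g q = 0 := by
      rw [hg]; simp [hLq]
    have hgdiff : ∀ m' ∈ p.coeff.support, m' ≠ v →
        g (emb m') - g (emb v) =
          pairCLM Lvec (emb m' - emb v) *
            (f ((pairCLM Lvec (emb m' - emb v))⁻¹ • (emb m' - emb v)) - f q) := by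
      intro m' hm' hm'v
      have hm'S₀ : m' ∈ S₀ := Finset.mem_filter.mpr ⟨hm', hm'v⟩
      obtain ⟨h1, h2, h3⟩ := hS₀K m' hm'S₀
      have : g (emb m') - g (emb v) = g (emb m' - emb v) := by rw [map_sub]
      rw [this, hg]
      simp only [ContinuousLinearMap.sub_apply, ContinuousLinearMap.smul_apply, smul_eq_mul]
      rw [ContinuousLinearMap.map_smul, smul_eq_mul]
      have h3' : pairR Lvec (emb m' - emb v) ≠ 0 := h3.ne'
      field_simp
    have hg_gen : ∀ y ∈ emb '' (p.coeff.support : Set (Fin n → ℤ)), g y ≤ g (emb v) := by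
      rintro y ⟨m', hm', rfl⟩
      by_cases hm'v : m' = v
      · subst hm'v; exact le_refl _
      · have hd := hgdiff m' hm' hm'v
        have hm'S₀ : m' ∈ S₀ := Finset.mem_filter.mpr ⟨hm', hm'v⟩
        obtain ⟨h1, h2, h3⟩ := hS₀K m' hm'S₀
        set t := (pairCLM Lvec (emb m' - emb v))⁻¹ • (emb m' - emb v) with ht
        have htT : t ∈ T := ⟨m', hm'S₀, rfl⟩
        have hft : f t ≤ f q := by
          by_cases htq : t = q
          · rw [htq]
          · exact (hf t htT htq).le
        nlinarith
    have hgmax : ∀ x ∈ NP p, g x ≤ g (emb v) := by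
      intro x hx
      exact pair_le_on_hull g hg_gen x hx
    set E : Set (Fin n → ℝ) :=
      {x | x ∈ NP p ∧ ∃ t : ℝ, 0 ≤ t ∧ x = emb v + t • q} with hE
    have hvE : emb v ∈ E := ⟨mem_NP_of_supp hvsupp, 0, le_refl 0, by simp⟩
    obtain ⟨ε, hεpos, hεmem⟩ := exists_eps_mem hNP (mem_NP_of_supp hvsupp) hqK
    have hεE : emb v + ε • q ∈ E := ⟨hεmem, ε, hεpos.le, rfl⟩
    have hfin : (emb '' (p.coeff.support : Set (Fin n → ℤ))).Finite :=
      (p.coeff.support.finite_toSet).image _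
    have hEexp : IsExposed ℝ (NP p) E := by
      intro _
      refine ⟨g, Set.ext fun x => ?_⟩
      constructor
      · rintro ⟨hxNP, t, ht, rfl⟩
        refine ⟨hxNP, fun y hy => ?_⟩
        have : g (emb v + t • q) = g (emb v) := by
          rw [map_add, ContinuousLinearMap.map_smul, hgq, smul_zero, add_zero]
        rw [this]
        exact hgmax y hy
      · rintro ⟨hxNP, hxmax⟩
        have hgx : g x = g (emb v) :=
          le_antisymm (hgmax x hxNP) (hxmax (emb v) (mem_NP_of_supp hvsupp))
        -- represent x as a convex combination
        have hxrep := hxNP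
        rw [NP, hfin.convexHull_eq] at hxrep
        obtain ⟨wt, hwt0, hwt1, hwtx⟩ := hxrep
        rw [Finset.centerMass_eq_of_sum_1 _ _ hwt1] at hwtx
        simp only [id_eq] at hwtx
        have e1 : ∑ y ∈ hfin.toFinset, wt y * (g (emb v) - g y)
            = (∑ y ∈ hfin.toFinset, wt y) * g (emb v) - g (∑ y ∈ hfin.toFinset, wt y • y) := by
          rw [map_sum, Finset.sum_mul, ← Finset.sum_sub_distrib]
          refine Finset.sum_congr rfl fun y _ => ?_
          rw [ContinuousLinearMap.map_smul, smul_eq_mul]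
          ring
        have hsum0 : ∑ y ∈ hfin.toFinset, wt y * (g (emb v) - g y) = 0 := by
          rw [e1, hwt1, hwtx, hgx]; ring
        have hterm : ∀ y ∈ hfin.toFinset, wt y * (g (emb v) - g y) = 0 := by
          refine (Finset.sum_eq_zero_iff_of_nonneg ?_).mp hsum0
          intro y hy
          have hy' : y ∈ emb '' (p.coeff.support : Set (Fin n → ℤ)) := hfin.mem_toFinset.mp hy
          have h5 := hg_gen y hy'
          have hw := hwt0 y hy'
          nlinarith
        have hdecomp : ∀ y ∈ hfin.toFinset,
            wt y • (y - emb v) = (wt y * pairCLM Lvec (y - emb v)) • q ∧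
            0 ≤ wt y * pairCLM Lvec (y - emb v) := by
          intro y hy
          have hy' : y ∈ emb '' (p.coeff.support : Set (Fin n → ℤ)) := hfin.mem_toFinset.mp hy
          obtain ⟨m', hm', rfl⟩ := hy'
          have hyK : emb m' - emb v ∈ K := hmemK m' hm'
          have hwnn : 0 ≤ wt (emb m') := hwt0 _ ⟨m', hm', rfl⟩
          have hLnn : 0 ≤ pairCLM Lvec (emb m' - emb v) := hLK _ hyK
          refine ⟨?_, mul_nonneg hwnn hLnn⟩
          by_cases hw0 : wt (emb m') = 0
          · rw [hw0]; simp
          · have hgy : g (emb m') = g (emb v) := by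
              have := hterm _ hy
              rcases mul_eq_zero.mp this with h | h
              · exact absurd h hw0
              · linarith
            by_cases hm'v : m' = v
            · subst hm'v; simp [pairR]
            · have hm'S₀ : m' ∈ S₀ := Finset.mem_filter.mpr ⟨hm', hm'v⟩
              obtain ⟨hK1, hK2, hK3⟩ := hS₀K m' hm'S₀
              have hd := hgdiff m' hm' hm'v
              rw [hgy, sub_self] at hd
              have hfeq : f ((pairCLM Lvec (emb m' - emb v))⁻¹ • (emb m' - emb v)) = f q := by
                rcases mul_eq_zero.mp hd.symm with h | h
                · exact absurd h hK3.ne'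
                · linarith
              have htq : (pairCLM Lvec (emb m' - emb v))⁻¹ • (emb m' - emb v) = q := by
                by_contra hne
                exact absurd hfeq (ne_of_lt (hf _ ⟨m', hm'S₀, rfl⟩ hne))
              have hsq : emb m' - emb v = (pairCLM Lvec (emb m' - emb v)) • q := by
                rw [← htq, smul_inv_smul₀ hK3.ne']
              conv_lhs => rw [hsq]
              rw [smul_smul]
        have hv' : emb v = ∑ y ∈ hfin.toFinset, wt y • emb v := by
          rw [← Finset.sum_smul, hwt1, one_smul]
        have hxv : x - emb v = (∑ y ∈ hfin.toFinset, wt y * pairCLM Lvec (y - emb v)) • q := by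
          have h6 : x - emb v = ∑ y ∈ hfin.toFinset, wt y • (y - emb v) := by
            rw [← hwtx]
            conv_lhs => rw [hv']
            rw [← Finset.sum_sub_distrib]
            exact Finset.sum_congr rfl fun y _ => (smul_sub _ _ _).symm
          rw [h6, Finset.sum_congr rfl (fun y hy => (hdecomp y hy).1), ← Finset.sum_smul]
        refine ⟨hxNP, ∑ y ∈ hfin.toFinset, wt y * pairCLM Lvec (y - emb v),
          Finset.sum_nonneg fun y hy => (hdecomp y hy).2, ?_⟩
        rw [← hxv]
        abel
    -- E is an edge of NP p containing emb v
    have hEedge : IsEdgeOf (NP p) E := by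
      refine ⟨hEexp, ?_⟩
      have hsub : E ⊆ (AffineSubspace.mk' (emb v) (ℝ ∙ q) : Set (Fin n → ℝ)) := by
        rintro x ⟨hxNP, t, ht, rfl⟩
        refine AffineSubspace.mem_mk'.mpr ?_
        have : (emb v + t • q) -ᵥ emb v = t • q := by
          simp [vsub_eq_sub]
        rw [this]
        exact Submodule.mem_span_singleton.mpr ⟨t, rfl⟩
      have hle : affineSpan ℝ E ≤ AffineSubspace.mk' (emb v) (ℝ ∙ q) :=
        affineSpan_le.mpr hsub
      have hdirle : (affineSpan ℝ E).direction ≤ ℝ ∙ q := by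
        have := AffineSubspace.direction_le hle
        rwa [AffineSubspace.direction_mk'] at this
      have hdirge : (ℝ ∙ q) ≤ (affineSpan ℝ E).direction := by
        rw [Submodule.span_singleton_le_iff_mem]
        have hv1 : emb v ∈ affineSpan ℝ E := subset_affineSpan ℝ E hvE
        have hv2 : emb v + ε • q ∈ affineSpan ℝ E := subset_affineSpan ℝ E hεE
        have hmem : (emb v + ε • q) -ᵥ emb v ∈ (affineSpan ℝ E).direction :=
          AffineSubspace.vsub_mem_direction hv2 hv1
        have h7 : ε • q ∈ (affineSpan ℝ E).direction := by
          have : (emb v + ε • q) -ᵥ emb v = ε • q := by simp [vsub_eq_sub]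
          rwa [this] at hmem
        have h8 := Submodule.smul_mem _ ε⁻¹ h7
        rwa [inv_smul_smul₀ hεpos.ne'] at h8
      rw [le_antisymm hdirle hdirge]
      exact finrank_span_singleton hq0
    obtain ⟨i₀, hi₀E⟩ := hedge E hEedge hvE
    obtain ⟨_, t, ht0, hteq⟩ := hi₀E
    have htq : emb (b i₀) = t • q := by
      rw [emb_add] at hteq
      have := congrArg (fun z => z - emb v) hteq
      simpa using this
    have htne : t ≠ 0 := by
      intro h
      rw [h, zero_smul] at htq
      exact b.ne_zero i₀ (emb_injective (by rw [htq, emb_zero]))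
    have hpos : 0 < t := lt_of_le_of_ne ht0 (Ne.symm htne)
    have hnn : 0 ≤ pairCLM (emb (beta b i)) (emb (b i₀)) := by
      rw [coord_emb, b.repr_self]
      rw [Finsupp.single_apply]
      split <;> norm_num
    rw [htq, ContinuousLinearMap.map_smul, smul_eq_mul] at hnn
    by_contra hcon
    push_neg at hcon
    nlinarith
  -- conclude from the extreme points of the hull of T
  have hhull : ∀ x ∈ T, 0 ≤ pairCLM (emb (beta b i)) x := by
    intro x hx
    have hx' : x ∈ convexHull ℝ T := subset_convexHull ℝ T hx
    rw [finite_convexHull_extremePoints hTfin] at hx'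
    exact pair_ge_on_hull _ hExt x hx'
  by_cases hmv : m = v
  · subst hmv; simp
  · have hmS₀ : m ∈ S₀ := Finset.mem_filter.mpr ⟨hm, hmv⟩
    obtain ⟨h1, h2, h3⟩ := hS₀K m hmS₀
    have h9 := hhull _ ⟨m, hmS₀, rfl⟩
    rw [ContinuousLinearMap.map_smul, smul_eq_mul] at h9
    have h4 : 0 ≤ pairCLM (emb (beta b i)) (emb m - emb v) := by
      by_contra hcon
      push_neg at hcon
      nlinarith [inv_pos.mpr h3]
    rw [show emb m - emb v = emb (m - v) from (emb_sub m v).symm, coord_emb] at h4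
    exact_mod_cast h4

def zpairLM (u : Fin n → ℤ) : (Fin n → ℤ) →ₗ[ℤ] ℤ where
  toFun x := zpair u x
  map_add' x y := by simp [zpair, mul_add, Finset.sum_add_distrib]
  map_smul' c x := by
    simp only [zpair, RingHom.id_apply, smul_eq_mul, Finset.mul_sum, Pi.smul_apply]
    exact Finset.sum_congr rfl fun j _ => by ring

@[simp] lemma zpairLM_apply (u x : Fin n → ℤ) : zpairLM u x = zpair u x := rfl

lemma zpair_single (w : Fin n → ℤ) (j : Fin n) : zpair w (Pi.single j 1) = w j := by
  simp [zpair, Pi.single_apply]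

lemma zpair_add_right (w x y : Fin n → ℤ) : zpair w (x + y) = zpair w x + zpair w y :=
  (zpairLM w).map_add x y

/-- the coordinate functional is bounded below on `NP p` by its value at `v`. -/
lemma coord_min_on_NP
    (hNP : NP p = {x | ∀ k, -(1:ℝ) ≤ pairR (emb (u k)) x})
    (hvsupp : v ∈ p.coeff.support)
    (hvext : emb v ∈ Set.extremePoints ℝ (NP p))
    (hedge : ∀ E : Set (Fin n → ℝ), IsEdgeOf (NP p) E → emb v ∈ E →
       ∃ i : Fin n, emb (v + b i) ∈ E) (i : Fin n) :
    ∀ x ∈ NP p, ((b.repr v i : ℤ) : ℝ) ≤ pairCLM (emb (beta b i)) x := by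
  refine pair_ge_on_hull _ ?_
  rintro y ⟨m', hm', rfl⟩
  rw [coord_emb]
  have h1 : 0 ≤ b.repr (m' - v) i := repr_nonneg hNP hvsupp hvext hedge hm' i
  have h2 : b.repr (m' - v) i = b.repr m' i - b.repr v i := by
    rw [map_sub, Finsupp.sub_apply]
  have : b.repr v i ≤ b.repr m' i := by omega
  exact_mod_cast this

set_option maxHeartbeats 1000000 in
lemma repr_v_neg_one
    (hNP : NP p = {x | ∀ k, -(1:ℝ) ≤ pairR (emb (u k)) x})
    (hprim : ∀ k, Finset.univ.gcd (u k) = 1)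
    (hvsupp : v ∈ p.coeff.support)
    (hvext : emb v ∈ Set.extremePoints ℝ (NP p))
    (hbsupp : ∀ i, v + b i ∈ p.coeff.support)
    (hedge : ∀ E : Set (Fin n → ℝ), IsEdgeOf (NP p) E → emb v ∈ E →
       ∃ i : Fin n, emb (v + b i) ∈ E)
    (i : Fin n) : b.repr v i = -1 := by
  classical
  have hn0 : 0 < (n : ℝ) := by
    have : 0 < n := Nat.pos_of_ne_zero (by rintro rfl; exact i.elim0)
    exact_mod_cast this
  set y : Fin n → (Fin n → ℝ) := fun j => if j = i then emb v else emb (v + b j) with hy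
  have hymem : ∀ j, y j ∈ NP p := by
    intro j
    by_cases hj : j = i
    · simp only [hy, if_pos hj]; exact mem_NP_of_supp hvsupp
    · simp only [hy, if_neg hj]; exact mem_NP_of_supp (hbsupp j)
  set x₀ : Fin n → ℝ := ∑ j, (n:ℝ)⁻¹ • y j with hx₀
  have hx₀NP : x₀ ∈ NP p := by
    rw [hx₀]
    refine NP_convex.sum_mem (fun j _ => by positivity) ?_ (fun j _ => hymem j)
    rw [Finset.sum_const, Finset.card_univ, Fintype.card_fin, nsmul_eq_mul]
    field_simp
  have hx₀eq : x₀ = emb v + (n:ℝ)⁻¹ • ∑ j ∈ Finset.univ.erase i, emb (b j) := by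
    have hvsum : emb v = ∑ _j : Fin n, (n:ℝ)⁻¹ • emb v := by
      rw [Finset.sum_const, Finset.card_univ, Fintype.card_fin,
        ← Nat.cast_smul_eq_nsmul ℝ, smul_smul, mul_inv_cancel₀ hn0.ne', one_smul]
    have hdiff : ∀ j : Fin n, (n:ℝ)⁻¹ • y j - (n:ℝ)⁻¹ • emb v
        = (n:ℝ)⁻¹ • (if j = i then 0 else emb (b j)) := by
      intro j
      by_cases hj : j = i
      · simp [hy, hj]
      · simp only [hy, if_neg hj]
        rw [emb_add, ← smul_sub]
        congr 1
        abel
    have h6 : x₀ - emb v = (n:ℝ)⁻¹ • ∑ j ∈ Finset.univ.erase i, emb (b j) := by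
      rw [hx₀]
      conv_lhs => rw [hvsum]
      rw [← Finset.sum_sub_distrib, Finset.sum_congr rfl (fun j _ => hdiff j), ← Finset.smul_sum]
      congr 1
      rw [← Finset.sum_erase (a := i) (f := fun j => if j = i then (0:Fin n → ℝ) else emb (b j))
        Finset.univ (by simp)]
      exact Finset.sum_congr rfl fun j hj => by rw [if_neg (Finset.mem_erase.mp hj).1]
    have := congrArg (fun z => emb v + z) h6
    simpa using this
  -- coordinate value at x₀ equals the coordinate of v
  have hcoordx₀ : pairCLM (emb (beta b i)) x₀ = ((b.repr v i : ℤ) : ℝ) := by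
    rw [hx₀eq, map_add, ContinuousLinearMap.map_smul, map_sum]
    have hz : ∀ j ∈ Finset.univ.erase i, pairCLM (emb (beta b i)) (emb (b j)) = 0 := by
      intro j hj
      have hj' : j ≠ i := (Finset.mem_erase.mp hj).1
      rw [coord_emb, b.repr_self, Finsupp.single_apply, if_neg hj']
      norm_num
    rw [Finset.sum_congr rfl hz, Finset.sum_const, smul_zero, smul_zero, add_zero]
    rw [show emb v = emb ((v : Fin n → ℤ)) from rfl, coord_emb]
  -- there is an active constraint at x₀
  have hactive : ∃ k, pairR (emb (u k)) x₀ = -1 := by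
    by_contra hall
    push_neg at hall
    obtain ⟨ε, hεpos, hεmem⟩ := exists_eps_mem hNP hx₀NP
      (q := -(emb (b i))) (fun k hk => absurd hk (hall k))
    have h1 := coord_min_on_NP hNP hvsupp hvext hedge i _ hεmem
    rw [map_add, ContinuousLinearMap.map_smul, hcoordx₀] at h1
    have h2 : pairCLM (emb (beta b i)) (-(emb (b i))) = -1 := by
      rw [map_neg, coord_emb, b.repr_self, Finsupp.single_apply, if_pos rfl]
      norm_num
    rw [h2] at h1
    simp only [smul_eq_mul, mul_neg_one] at h1
    linarith
  obtain ⟨k, hk⟩ := hactive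
  -- all terms in the convex combination attain the bound -1
  have hsumy : ∑ j, pairR (emb (u k)) (y j) = -(n:ℝ) := by
    have : pairR (emb (u k)) x₀ = (n:ℝ)⁻¹ * ∑ j, pairR (emb (u k)) (y j) := by
      rw [hx₀, ← pairCLM_apply, map_sum, Finset.mul_sum]
      refine Finset.sum_congr rfl fun j _ => ?_
      rw [ContinuousLinearMap.map_smul, smul_eq_mul, pairCLM_apply]
    rw [hk] at this
    field_simp at this
    linarith
  have hyge : ∀ j, -(1:ℝ) ≤ pairR (emb (u k)) (y j) := by
    intro j
    have := hymem j
    rw [hNP] at this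
    exact this k
  have hyeq : ∀ j, pairR (emb (u k)) (y j) = -1 := by
    have hnn : ∀ j ∈ Finset.univ, (0:ℝ) ≤ pairR (emb (u k)) (y j) + 1 := fun j _ => by
      linarith [hyge j]
    have hzero : ∑ j, (pairR (emb (u k)) (y j) + 1) = 0 := by
      rw [Finset.sum_add_distrib, hsumy, Finset.sum_const, Finset.card_univ, Fintype.card_fin,
        nsmul_eq_mul, mul_one]
      ring
    intro j
    have := (Finset.sum_eq_zero_iff_of_nonneg hnn).mp hzero j (Finset.mem_univ j)
    linarith
  -- integer consequences
  have hzv : zpair (u k) v = -1 := by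
    have := hyeq i
    simp only [hy, if_pos rfl] at this
    rw [pairR_emb] at this
    exact_mod_cast this
  have hzbj : ∀ j, j ≠ i → zpair (u k) (b j) = 0 := by
    intro j hj
    have := hyeq j
    simp only [hy, if_neg hj] at this
    rw [pairR_emb] at this
    have h3 : zpair (u k) (v + b j) = -1 := by exact_mod_cast this
    rw [zpair_add_right, hzv] at h3
    omega
  have hcge : 0 ≤ zpair (u k) (b i) := by
    have := mem_NP_of_supp (hbsupp i)
    rw [hNP] at this
    have h4 := this k
    rw [pairR_emb] at h4
    have h5 : (-1 : ℤ) ≤ zpair (u k) (v + b i) := by exact_mod_cast h4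
    rw [zpair_add_right, hzv] at h5
    omega
  set c : ℤ := zpair (u k) (b i) with hc
  have hφψ : zpairLM (u k) = c • b.coord i := by
    refine b.ext fun j => ?_
    rw [zpairLM_apply, LinearMap.smul_apply, Module.Basis.coord_apply, b.repr_self,
      Finsupp.single_apply, smul_eq_mul]
    by_cases hj : j = i
    · subst hj; rw [if_pos rfl, mul_one]
    · rw [hzbj j hj, if_neg hj, mul_zero]
  have hukj : ∀ j, u k j = c * b.repr (Pi.single j 1) i := by
    intro j
    have := congrArg (fun φ => φ (Pi.single j 1)) hφψ
    simp only [zpairLM_apply, LinearMap.smul_apply, Module.Basis.coord_apply, smul_eq_mul] at this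
    rw [zpair_single] at this
    exact this
  have hcdvd : c ∣ Finset.univ.gcd (u k) :=
    Finset.dvd_gcd fun j _ => ⟨b.repr (Pi.single j 1) i, hukj j⟩
  rw [hprim k] at hcdvd
  have hc1 : c = 1 := Int.eq_one_of_dvd_one hcge hcdvd
  -- conclude
  have := congrArg (fun φ => φ v) hφψ
  simp only [zpairLM_apply, LinearMap.smul_apply, Module.Basis.coord_apply, smul_eq_mul, hc1,
    one_mul] at this
  rw [hzv] at this
  exact this.symm

lemma unique_simplex
    (hnn : ∀ m' ∈ p.coeff.support, ∀ i, 0 ≤ b.repr (m' - v) i)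
    (hv1 : ∀ i, b.repr v i = -1)
    (J : Finset (Fin n → ℤ)) (hJsub : J ⊆ p.coeff.support) (hJcard : J.card = n + 1)
    (hJsum : ∑ m' ∈ J, m' = (n : ℤ) • v) :
    J = insert v (Finset.image (fun i => v + b i) Finset.univ) := by
  classical
  set a : (Fin n → ℤ) → Fin n → ℤ := fun m' i => b.repr (m' - v) i with ha
  have hsumJ : ∑ m' ∈ J, (m' - v) = -v := by
    rw [Finset.sum_sub_distrib, hJsum, Finset.sum_const, hJcard,
      ← Nat.cast_smul_eq_nsmul ℤ]
    push_cast
    module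
  have h1 : ∀ i, ∑ m' ∈ J, a m' i = 1 := by
    intro i
    have e : ∑ m' ∈ J, a m' i = b.repr (∑ m' ∈ J, (m' - v)) i := by
      rw [map_sum, Finsupp.finset_sum_apply]
    rw [e, hsumJ, map_neg, Finsupp.neg_apply, hv1]
    norm_num
  have h0 : ∀ m' ∈ J, ∀ i, 0 ≤ a m' i := fun m' hm' => hnn m' (hJsub hm')
  have hle1 : ∀ m' ∈ J, ∀ i, a m' i ≤ 1 := by
    intro m' hm' i
    have h2 := Finset.single_le_sum (f := fun m'' => a m'' i) (fun m'' h => h0 m'' h i) hm'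
    rw [h1 i] at h2
    exact h2
  -- column uniqueness
  have huniq : ∀ i, ∀ m₁ ∈ J, ∀ m₂ ∈ J, a m₁ i = 1 → a m₂ i = 1 → m₁ = m₂ := by
    intro i m₁ hm₁ m₂ hm₂ ha₁ ha₂
    by_contra hne
    have hpair : ({m₁, m₂} : Finset (Fin n → ℤ)) ⊆ J := by
      intro x hx
      rcases Finset.mem_insert.mp hx with rfl | hx
      · exact hm₁
      · rw [Finset.mem_singleton.mp hx]; exact hm₂
    have h3 : ∑ m' ∈ ({m₁, m₂} : Finset (Fin n → ℤ)), a m' i ≤ ∑ m' ∈ J, a m' i :=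
      Finset.sum_le_sum_of_subset_of_nonneg hpair (fun x hx _ => h0 x hx i)
    rw [Finset.sum_pair hne, ha₁, ha₂, h1 i] at h3
    omega
  -- column existence
  have hexist : ∀ i, ∃ m' ∈ J, a m' i = 1 := by
    intro i
    obtain ⟨m', hm', hne⟩ := Finset.exists_ne_zero_of_sum_ne_zero (by rw [h1 i]; norm_num :
      ∑ m' ∈ J, a m' i ≠ 0)
    exact ⟨m', hm', by have := h0 m' hm' i; have := hle1 m' hm' i; omega⟩
  -- zero row means equal to v
  have hzero : ∀ m' ∈ J, (∀ i, a m' i = 0) → m' = v := by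
    intro m' hm' h
    have : b.repr (m' - v) = 0 := by
      ext j
      exact h j
    have h4 : m' - v = 0 := by
      have := congrArg (b.repr.symm) this
      rwa [LinearEquiv.symm_apply_apply, map_zero] at this
    have := congrArg (fun z => z + v) h4
    simpa using this
  -- the injection into Option (Fin n)
  set χ : {x // x ∈ J} → Option (Fin n) := fun m' =>
    if h : ∃ i, a m'.1 i = 1 then some h.choose else none with hχ
  have hχinj : Function.Injective χ := by
    intro m₁ m₂ heq
    rw [hχ] at heq
    simp only at heq
    by_cases h₁ : ∃ i, a m₁.1 i = 1 <;> by_cases h₂ : ∃ i, a m₂.1 i = 1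
    · rw [dif_pos h₁, dif_pos h₂, Option.some_inj] at heq
      have e1 := h₁.choose_spec
      have e2 := h₂.choose_spec
      rw [heq] at e1
      exact Subtype.ext (huniq _ _ m₁.2 _ m₂.2 e1 e2)
    · rw [dif_pos h₁, dif_neg h₂] at heq; exact absurd heq (by simp)
    · rw [dif_neg h₁, dif_pos h₂] at heq; exact absurd heq (by simp)
    · push_neg at h₁ h₂
      have hv₁ : m₁.1 = v := hzero _ m₁.2 (fun i => by
        have := h0 _ m₁.2 i; have := hle1 _ m₁.2 i; have := h₁ i; omega)
      have hv₂ : m₂.1 = v := hzero _ m₂.2 (fun i => by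
        have := h0 _ m₂.2 i; have := hle1 _ m₂.2 i; have := h₂ i; omega)
      exact Subtype.ext (hv₁.trans hv₂.symm)
  have hχbij : Function.Bijective χ := by
    rw [Fintype.bijective_iff_injective_and_card]
    refine ⟨hχinj, ?_⟩
    rw [Fintype.card_coe, hJcard, Fintype.card_option, Fintype.card_fin]
  -- every element of J is v or v + b i
  have hclass : ∀ m' ∈ J, m' = v ∨ ∃ i, m' = v + b i := by
    intro m' hm'
    by_cases h : ∃ i, a m' i = 1
    · right
      obtain ⟨i, hi⟩ := h
      refine ⟨i, ?_⟩
      -- show a m' j = 0 for j ≠ i, i.e. m' - v = b i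
      have hsingle : ∀ j, a m' j = (if j = i then 1 else 0) := by
        intro j
        by_cases hj : j = i
        · rw [if_pos hj, hj]; exact hi
        · rw [if_neg hj]
          by_contra hne0
          have haj : a m' j = 1 := by
            have := h0 m' hm' j; have := hle1 m' hm' j; omega
          have claim : ∀ j', a m' j' = 1 → χ ⟨m', hm'⟩ = some j' := by
            intro j' hj'
            obtain ⟨m'', hm''⟩ := hχbij.2 (some j')
            by_cases h'' : ∃ i', a m''.1 i' = 1
            · have hsome : χ m'' = some h''.choose := by
                rw [hχ]; simp only; rw [dif_pos h'']
              have hcj : h''.choose = j' := by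
                rw [hsome] at hm''
                exact Option.some_inj.mp hm''
              have e3 := h''.choose_spec
              rw [hcj] at e3
              have hmm : m''.1 = m' := huniq j' _ m''.2 _ hm' e3 hj'
              have heq2 : χ m'' = χ ⟨m', hm'⟩ := by
                congr 1
                exact Subtype.ext hmm
              rw [← heq2, hsome, hcj]
            · have : χ m'' = none := by
                rw [hχ]; simp only; rw [dif_neg h'']
              rw [this] at hm''
              exact absurd hm'' (by simp)
          have c1 := claim i hi
          have c2 := claim j haj
          rw [c1] at c2
          exact hj (Option.some_inj.mp c2.symm)
      -- conclude m' - v = b i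
      have : b.repr (m' - v) = b.repr (b i) := by
        rw [b.repr_self]
        ext j
        rw [Finsupp.single_apply]
        have := hsingle j
        rw [ha] at this
        simp only at this
        rw [this]
        by_cases hj : j = i
        · rw [if_pos hj, if_pos (hj ▸ rfl)]
        · rw [if_neg hj, if_neg (fun hh => hj hh.symm)]
      have h9 : m' - v = b i := b.repr.injective this
      have := congrArg (fun z => z + v) h9
      simpa [add_comm] using this
    · left
      push_neg at h
      exact hzero m' hm' (fun i => by
        have := h0 m' hm' i; have := hle1 m' hm' i; have := h i; omega)
  -- conclude by cardinality
  have hsub : J ⊆ insert v (Finset.image (fun i => v + b i) Finset.univ) := by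
    intro m' hm'
    rcases hclass m' hm' with rfl | ⟨i, rfl⟩
    · exact Finset.mem_insert_self _ _
    · exact Finset.mem_insert_of_mem (Finset.mem_image_of_mem _ (Finset.mem_univ i))
  refine Finset.eq_of_subset_of_card_le hsub ?_
  calc (insert v (Finset.image (fun i => v + b i) Finset.univ)).card
      ≤ (Finset.image (fun i => v + b i) Finset.univ).card + 1 := Finset.card_insert_le _ _
    _ ≤ n + 1 := by
        have := Finset.card_image_le (s := (Finset.univ : Finset (Fin n)))
          (f := fun i => v + b i)
        simp only [Finset.card_univ, Fintype.card_fin] at this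
        omega
    _ = J.card := hJcard.symm

lemma emb_sum {α : Type*} (s : Finset α) (f : α → (Fin n → ℤ)) :
    emb (∑ a ∈ s, f a) = ∑ a ∈ s, emb (f a) := by
  funext j
  simp [emb, Finset.sum_apply]

lemma emb_single (j : Fin n) : emb (Pi.single j (1:ℤ)) = Pi.single j (1:ℝ) := by
  funext a
  simp [emb, Pi.single_apply, apply_ite]

lemma span_emb_basis (b : Module.Basis (Fin n) ℤ (Fin n → ℤ)) :
    Submodule.span ℝ (Set.range fun i => emb (b i)) = ⊤ := by
  rw [eq_top_iff]
  rintro x -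
  have hs : ∀ j, Pi.single j (1:ℝ) ∈ Submodule.span ℝ (Set.range fun i => emb (b i)) := by
    intro j
    have hrep := b.sum_repr (Pi.single j (1:ℤ))
    have h1 : emb (∑ i, b.repr (Pi.single j (1:ℤ)) i • b i)
        = ∑ i, ((b.repr (Pi.single j (1:ℤ)) i : ℝ)) • emb (b i) := by
      rw [emb_sum]
      exact Finset.sum_congr rfl fun i _ => emb_zsmul _ _
    have he : (Pi.single j (1:ℝ) : Fin n → ℝ)
        = ∑ i, ((b.repr (Pi.single j (1:ℤ)) i : ℝ)) • emb (b i) := by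
      rw [← h1, hrep, emb_single]
    rw [he]
    exact Submodule.sum_mem _ fun i _ => Submodule.smul_mem _ _
      (Submodule.subset_span ⟨i, rfl⟩)
  have hx : x = ∑ j, x j • (Pi.single j (1:ℝ) : Fin n → ℝ) := by
    funext a
    simp [Pi.single_apply, Finset.sum_apply]
  rw [hx]
  exact Submodule.sum_mem _ fun j _ => Submodule.smul_mem _ _ (hs j)

lemma affineSpan_J₀_top (b : Module.Basis (Fin n) ℤ (Fin n → ℤ)) (v : Fin n → ℤ) :
    affineSpan ℝ (emb '' ((insert v (Finset.image (fun i => v + b i) Finset.univ) :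
      Finset (Fin n → ℤ)) : Set (Fin n → ℤ))) = ⊤ := by
  classical
  set S := emb '' ((insert v (Finset.image (fun i => v + b i) Finset.univ) :
      Finset (Fin n → ℤ)) : Set (Fin n → ℤ)) with hS
  have hvS : emb v ∈ S := ⟨v, by simp, rfl⟩
  have hiS : ∀ i, emb (v + b i) ∈ S := fun i => ⟨v + b i, by simp, rfl⟩
  have hvA : emb v ∈ affineSpan ℝ S := subset_affineSpan ℝ S hvS
  have hdir : ∀ i, emb (b i) ∈ (affineSpan ℝ S).direction := by
    intro i
    have h1 : emb (v + b i) ∈ affineSpan ℝ S := subset_affineSpan ℝ S (hiS i)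
    have h2 := AffineSubspace.vsub_mem_direction h1 hvA
    have h3 : emb (v + b i) -ᵥ emb v = emb (b i) := by
      rw [emb_add]
      simp [vsub_eq_sub]
    rwa [h3] at h2
  have hdirtop : (affineSpan ℝ S).direction = ⊤ := by
    rw [eq_top_iff, ← span_emb_basis b, Submodule.span_le]
    rintro y ⟨i, rfl⟩
    exact hdir i
  rw [eq_top_iff]
  rintro x -
  have hmem : (x - emb v) +ᵥ emb v ∈ affineSpan ℝ S :=
    AffineSubspace.vadd_mem_of_mem_direction (by rw [hdirtop]; trivial) hvA
  simpa [vadd_eq_add, sub_add_cancel] using hmem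

def rJ (n : ℕ) (J : Finset (Fin n → ℤ)) : ℝ :=
  (((n.factorial : ℝ) *
    (volume (convexHull ℝ (emb '' (J : Set (Fin n → ℤ))))).toReal) ^ 2 : ℝ)

lemma muPoly_apply (p : LP n) (τ : Fin n → ℤ) :
    (muPoly p).coeff τ = ∑ J ∈ p.coeff.support.powersetCard (n + 1),
      rJ n J • (if (∑ m ∈ J, m) = τ then ∏ m ∈ J, p.coeff m else 0) := by
  rw [muPoly, AddMonoidAlgebra.coeff_sum, Finsupp.finset_sum_apply]
  refine Finset.sum_congr rfl fun J _ => ?_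
  rw [AddMonoidAlgebra.coeff_smul, Finsupp.smul_apply, AddMonoidAlgebra.prod_single,
    AddMonoidAlgebra.coeff_single, rJ]
  congr 1
  rw [Finsupp.single_apply]

lemma vol_J₀_ne_zero (b : Module.Basis (Fin n) ℤ (Fin n → ℤ)) (v : Fin n → ℤ) :
    (volume (convexHull ℝ (emb '' ((insert v (Finset.image (fun i => v + b i) Finset.univ) :
      Finset (Fin n → ℤ)) : Set (Fin n → ℤ))))).toReal ≠ 0 := by
  classical
  set S := emb '' ((insert v (Finset.image (fun i => v + b i) Finset.univ) :
      Finset (Fin n → ℤ)) : Set (Fin n → ℤ)) with hS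
  have hfin : S.Finite := Set.Finite.image _ (Finset.finite_toSet _)
  have hconvex : Convex ℝ (convexHull ℝ S) := convex_convexHull ℝ S
  have hint : (interior (convexHull ℝ S)).Nonempty := by
    rw [hconvex.interior_nonempty_iff_affineSpan_eq_top, affineSpan_convexHull]
    exact affineSpan_J₀_top b v
  have hpos : 0 < volume (convexHull ℝ S) :=
    lt_of_lt_of_le (isOpen_interior.measure_pos volume hint)
      (measure_mono interior_subset)
  have hlt : volume (convexHull ℝ S) < ⊤ := (hfin.isCompact_convexHull ℝ).measure_lt_top
  rw [ENNReal.toReal_ne_zero]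
  exact ⟨hpos.ne', hlt.ne⟩

lemma muPoly_coeff_ne_zero
    (hvsupp : v ∈ p.coeff.support)
    (hbsupp : ∀ i, v + b i ∈ p.coeff.support)
    (hnn : ∀ m' ∈ p.coeff.support, ∀ i, 0 ≤ b.repr (m' - v) i)
    (hv1 : ∀ i, b.repr v i = -1) :
    (muPoly p).coeff ((n:ℤ) • v) ≠ 0 := by
  classical
  set J₀ : Finset (Fin n → ℤ) := insert v (Finset.image (fun i => v + b i) Finset.univ)
    with hJ₀
  have hvnot : v ∉ Finset.image (fun i => v + b i) Finset.univ := by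
    intro hmem
    obtain ⟨i, _, hi⟩ := Finset.mem_image.mp hmem
    exact b.ne_zero i (by rwa [add_eq_left] at hi)
  have hinj : Function.Injective (fun i : Fin n => v + b i) :=
    fun i j h => b.injective (by simpa using h)
  have hcard : J₀.card = n + 1 := by
    rw [hJ₀, Finset.card_insert_of_notMem hvnot, Finset.card_image_of_injective _ hinj,
      Finset.card_univ, Fintype.card_fin]
  have hsub : J₀ ⊆ p.coeff.support := by
    intro x hx
    rcases Finset.mem_insert.mp hx with rfl | hx
    · exact hvsupp
    · obtain ⟨i, _, rfl⟩ := Finset.mem_image.mp hx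
      exact hbsupp i
  have hbv : ∑ i, b i = -v := by
    have h := b.sum_repr v
    have h2 : ∑ i, b.repr v i • b i = -∑ i, b i := by
      rw [← Finset.sum_neg_distrib]
      exact Finset.sum_congr rfl fun i _ => by rw [hv1 i, neg_smul, one_smul]
    rw [h2] at h
    have := congrArg (fun z => -z) h
    simpa using this
  have hsum₀ : ∑ m' ∈ J₀, m' = (n:ℤ) • v := by
    rw [hJ₀, Finset.sum_insert hvnot, Finset.sum_image (fun i _ j _ h => hinj h),
      Finset.sum_add_distrib, Finset.sum_const, Finset.card_univ, Fintype.card_fin, hbv,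
      ← Nat.cast_smul_eq_nsmul ℤ]
    module
  have hJ₀pc : J₀ ∈ p.coeff.support.powersetCard (n+1) := Finset.mem_powersetCard.mpr ⟨hsub, hcard⟩
  rw [muPoly_apply]
  rw [Finset.sum_eq_single J₀ (fun J hJ hne => ?_) (fun h => absurd hJ₀pc h)]
  · rw [if_pos hsum₀]
    refine smul_ne_zero ?_ ?_
    · refine pow_ne_zero _ (mul_ne_zero ?_ ?_)
      · exact_mod_cast n.factorial_ne_zero
      · exact vol_J₀_ne_zero b v
    · exact Finset.prod_ne_zero_iff.mpr fun m hm =>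
        Finsupp.mem_support_iff.mp (hsub hm)
  · rcases eq_or_ne (∑ m ∈ J, m) ((n:ℤ) • v) with hs | hs
    · obtain ⟨hJsub, hJcard⟩ := Finset.mem_powersetCard.mp hJ
      exact absurd (unique_simplex hnn hv1 J hJsub hJcard hs) hne
    · rw [if_neg hs, smul_zero]

lemma muPoly_support_bound
    (hNP : NP p = {x | ∀ k, -(1:ℝ) ≤ pairR (emb (u k)) x})
    {τ : Fin n → ℤ} (hτ : τ ∈ (muPoly p).coeff.support) (k : ι) :
    -(n:ℤ) ≤ zpair (u k) τ := by
  classical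
  have hne := Finsupp.mem_support_iff.mp hτ
  rw [muPoly_apply] at hne
  obtain ⟨J, hJpc, hJne⟩ := Finset.exists_ne_zero_of_sum_ne_zero hne
  obtain ⟨hJsub, hJcard⟩ := Finset.mem_powersetCard.mp hJpc
  have hsum : ∑ m ∈ J, m = τ := by
    by_contra h
    rw [if_neg h, smul_zero] at hJne
    exact hJne rfl
  rw [if_pos hsum] at hJne
  have hrJ : rJ n J ≠ 0 := fun h => hJne (by rw [h, zero_smul])
  have hvol : (volume (convexHull ℝ (emb '' (J : Set (Fin n → ℤ))))) ≠ 0 := by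
    intro h
    apply hrJ
    rw [rJ, h, ENNReal.toReal_zero, mul_zero]
    norm_num
  have hall : ∀ m ∈ J, -1 ≤ zpair (u k) m := by
    intro m hm
    have h1 := mem_NP_of_supp (hJsub hm)
    rw [hNP] at h1
    have h2 := h1 k
    rw [pairR_emb] at h2
    exact_mod_cast h2
  have hex : ∃ m₁ ∈ J, 0 ≤ zpair (u k) m₁ := by
    by_contra hcon
    push_neg at hcon
    have hallm : ∀ m ∈ J, zpair (u k) m = -1 := by
      intro m hm
      have := hall m hm
      have := hcon m hm
      omega
    have hJne' : J.Nonempty := Finset.card_pos.mp (by omega)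
    obtain ⟨m₀, hm₀⟩ := hJne'
    set W := LinearMap.ker ((pairCLM (emb (u k))) : (Fin n → ℝ) →ₗ[ℝ] ℝ) with hW
    set H := AffineSubspace.mk' (emb m₀) W with hH
    have hpair : ∀ m ∈ J, pairR (emb (u k)) (emb m) = -1 := by
      intro m hm
      rw [pairR_emb, hallm m hm]
      norm_num
    have hHne : H ≠ ⊤ := by
      intro htop
      have h0 : (0 : Fin n → ℝ) ∈ H := htop ▸ AffineSubspace.mem_top ℝ _ 0
      have h1 := AffineSubspace.mem_mk'.mp h0
      have h2 : pairCLM (emb (u k)) ((0 : Fin n → ℝ) -ᵥ emb m₀) = 0 := h1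
      rw [vsub_eq_sub, map_sub, map_zero, pairCLM_apply, hpair m₀ hm₀] at h2
      norm_num at h2
    have hsubH : convexHull ℝ (emb '' (J : Set (Fin n → ℤ))) ⊆ (H : Set (Fin n → ℝ)) := by
      refine convexHull_min ?_ (AffineSubspace.convex H)
      rintro y ⟨m, hm, rfl⟩
      refine AffineSubspace.mem_mk'.mpr ?_
      show pairCLM (emb (u k)) (emb m -ᵥ emb m₀) = 0
      rw [vsub_eq_sub, map_sub, pairCLM_apply, pairCLM_apply, hpair m hm, hpair m₀ hm₀]
      ring
    exact hvol (measure_mono_null hsubH (Measure.addHaar_affineSubspace volume H hHne))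
  obtain ⟨m₁, hm₁, hm₁0⟩ := hex
  have hτeq : zpair (u k) τ = ∑ m ∈ J, zpair (u k) m := by
    rw [← hsum]
    exact map_sum (zpairLM (u k)) _ _
  rw [hτeq]
  have hval : ∑ m ∈ J, (if m = m₁ then 0 else (-1:ℤ)) = -(n:ℤ) := by
    rw [← Finset.add_sum_erase _ _ hm₁, if_pos rfl, zero_add]
    have hcg : ∀ m ∈ J.erase m₁, (if m = m₁ then (0:ℤ) else (-1:ℤ)) = -1 := fun m hm =>
      if_neg (Finset.mem_erase.mp hm).1
    rw [Finset.sum_congr rfl hcg, Finset.sum_const, Finset.card_erase_of_mem hm₁, hJcard]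
    simp
  rw [← hval]
  refine Finset.sum_le_sum fun m hm => ?_
  by_cases h : m = m₁
  · rw [if_pos h, h]
    exact hm₁0
  · rw [if_neg h]
    exact hall m hm

lemma smul_extreme_mem_muPoly
    (huni : UnimodularSupport p)
    (hNP : NP p = {x | ∀ k, -(1:ℝ) ≤ pairR (emb (u k)) x})
    (hprim : ∀ k, IsPrimitive (u k))
    {x : Fin n → ℝ} (hx : x ∈ Set.extremePoints ℝ (NP p)) :
    (n : ℝ) • x ∈ NP (muPoly p) := by
  classical
  have hxT : x ∈ emb '' (p.coeff.support : Set (Fin n → ℤ)) := extremePoints_convexHull_subset hx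
  obtain ⟨v, hvsupp', rfl⟩ := hxT
  have hvsupp : v ∈ p.coeff.support := hvsupp'
  obtain ⟨w, hw, hli, hspan⟩ := huni v hx
  set B₀ := Module.Basis.mk hli (by rw [hspan]) with hB₀
  set e := B₀.indexEquiv (Pi.basisFun ℤ (Fin n)) with he
  set b := B₀.reindex e with hb
  have hbap : ∀ i, b i = w (e.symm i) - v := by
    intro i
    rw [hb, Module.Basis.reindex_apply, hB₀, Module.Basis.coe_mk]
  have hcancel : ∀ j, v + (w j - v) = w j := fun j => by abel
  have hbsupp : ∀ i, v + b i ∈ p.coeff.support := by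
    intro i
    rw [hbap, hcancel]
    exact (hw (e.symm i)).1
  have hedge : ∀ E : Set (Fin n → ℝ), IsEdgeOf (NP p) E → emb v ∈ E →
      ∃ i : Fin n, emb (v + b i) ∈ E := by
    intro E hE hvE
    refine ⟨e ⟨E, hE, hvE⟩, ?_⟩
    rw [hbap, Equiv.symm_apply_apply, hcancel]
    exact (hw ⟨E, hE, hvE⟩).2
  have hnn : ∀ m' ∈ p.coeff.support, ∀ i, 0 ≤ b.repr (m' - v) i :=
    fun m' hm' i => repr_nonneg hNP hvsupp hx hedge hm' i
  have hv1 : ∀ i, b.repr v i = -1 :=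
    fun i => repr_v_neg_one hNP (fun k => hprim k) hvsupp hx hbsupp hedge i
  have hmem : ((n:ℤ) • v) ∈ (muPoly p).coeff.support :=
    Finsupp.mem_support_iff.mpr (muPoly_coeff_ne_zero hvsupp hbsupp hnn hv1)
  have hfin : emb ((n:ℤ) • v) ∈ NP (muPoly p) := mem_NP_of_supp hmem
  rwa [emb_natCast_smul] at hfin

theorem main_statement (hp : p ≠ 0)
    (huni : UnimodularSupport p)
    (hprim : ∀ k, IsPrimitive (u k))
    (hNP : NP p = {x | ∀ k, -(1 : ℝ) ≤ pairR (emb (u k)) x}) :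
    NP (muPoly p) = (n : ℝ) • NP p := by
  classical
  have hsuppne : p.coeff.support.Nonempty := Finsupp.support_nonempty_iff.mpr (fun h => hp (AddMonoidAlgebra.coeff_eq_zero.mp h))
  have hNPne : (NP p).Nonempty := ⟨emb hsuppne.choose, mem_NP_of_supp hsuppne.choose_spec⟩
  have hfinp : (emb '' (p.coeff.support : Set (Fin n → ℤ))).Finite :=
    Set.Finite.image _ (Finset.finite_toSet _)
  have hsubset : NP (muPoly p) ⊆ {x | ∀ k, -(n:ℝ) ≤ pairR (emb (u k)) x} := by
    have hconv : Convex ℝ {x : Fin n → ℝ | ∀ k, -(n:ℝ) ≤ pairR (emb (u k)) x} := by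
      have heq : {x : Fin n → ℝ | ∀ k, -(n:ℝ) ≤ pairR (emb (u k)) x}
          = ⋂ k, {x | -(n:ℝ) ≤ pairR (emb (u k)) x} := by
        ext x; simp
      rw [heq]
      exact convex_iInter fun k =>
        convex_halfSpace_ge ((pairCLM (emb (u k)) : (Fin n → ℝ) →ₗ[ℝ] ℝ)).isLinear _
    refine convexHull_min ?_ hconv
    rintro y ⟨τ, hτ, rfl⟩ k
    have h1 := muPoly_support_bound hNP hτ k
    rw [pairR_emb]
    exact_mod_cast h1
  have hNPrep : NP p = convexHull ℝ (Set.extremePoints ℝ (NP p)) :=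
    finite_convexHull_extremePoints hfinp
  have hClaim2 : ∀ x ∈ Set.extremePoints ℝ (NP p), (n : ℝ) • x ∈ NP (muPoly p) :=
    fun x hx => smul_extreme_mem_muPoly huni hNP hprim hx
  have hge : (n:ℝ) • NP p ⊆ NP (muPoly p) := by
    conv_lhs => rw [hNPrep]
    rw [← convexHull_smul]
    refine convexHull_min ?_ (convex_convexHull ℝ _)
    rintro y ⟨x, hx, rfl⟩
    exact hClaim2 x hx
  rcases Nat.eq_zero_or_pos n with hn0 | hnpos
  · subst hn0
    have hss : Subsingleton (Fin 0 → ℝ) := ⟨fun a b => funext fun i => i.elim0⟩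
    have hgen : ∀ (s t : Set (Fin 0 → ℝ)), s.Nonempty → t.Nonempty → s = t := by
      rintro s t ⟨a, ha⟩ ⟨c, hc⟩
      ext z
      constructor
      · intro _; exact (Subsingleton.elim c z) ▸ hc
      · intro _; exact (Subsingleton.elim a z) ▸ ha
    have hμne : (NP (muPoly p)).Nonempty := by
      obtain ⟨v, hv⟩ := hsuppne
      have hvext : emb v ∈ Set.extremePoints ℝ (NP p) :=
        ⟨mem_NP_of_supp hv, fun x₁ _ x₂ _ _ =>
          Subsingleton.elim _ _⟩
      exact ⟨_, hClaim2 _ hvext⟩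
    exact hgen _ _ hμne (hNPne.smul_set)
  · have hn : (0:ℝ) < n := by exact_mod_cast hnpos
    have hset : (n:ℝ) • NP p = {x | ∀ k, -(n:ℝ) ≤ pairR (emb (u k)) x} := by
      rw [hNP]
      ext z
      constructor
      · intro hz
        obtain ⟨y, hy, rfl⟩ := Set.mem_smul_set.mp hz
        intro k
        have h2 := hy k
        rw [pairR_smul_right]
        nlinarith
      · intro hz
        refine Set.mem_smul_set.mpr ⟨(n:ℝ)⁻¹ • z, fun k => ?_, ?_⟩
        · rw [pairR_smul_right]
          have h3 := hz k
          rw [show -(1:ℝ) = (n:ℝ)⁻¹ * (-(n:ℝ)) by field_simp]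
          exact mul_le_mul_of_nonneg_left h3 (by positivity)
        · rw [smul_inv_smul₀ hn.ne']
    refine Set.Subset.antisymm (fun x hx => ?_) hge
    rw [hset]
    exact hsubset hx

end Vertex


end S11

/-- let `p` have unimodular support. If `NP(p)` is a reflexive
polytope (it is `n`-dimensional and can be written as
`{x : ⟨u_τ, x⟩ ≥ −1 for all τ}` with each `u_τ` a primitive lattice vector),
then `NP(μ(p)) = n·NP(p)`. -/
theorem statement11 {n : ℕ} (p : LP n) (hp : p ≠ 0)
    (huni : UnimodularSupport p)
    (hfull : affineSpan ℝ (emb '' (p.coeff.support : Set (Fin n → ℤ))) = ⊤)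
    {ι : Type} [Fintype ι] (u : ι → (Fin n → ℤ))
    (hprim : ∀ k, IsPrimitive (u k))
    (hNP : NP p = {x | ∀ k, -(1 : ℝ) ≤ pairR (emb (u k)) x}) :
    NP (muPoly p) = (n : ℝ) • NP p :=
  S11.main_statement hp huni hprim hNP

end
end

section
/- Let p ∈ ℂ[x^{±1}] be a one-variable Laurent polynomial with unimodular support (i.e., both the lowest and second-lowest, and highest and second-highest exponents of NP(p) are attained with nonzero coefficients; equivalently the coefficients adjacent to both endpoints of NP(p) are nonzero). Then μ(p) divides p^κ for some positive integer κ if and only if p = c·x^m·(x+ξ)^ν for some c, ξ ∈ ℂ*, m ∈ ℤ, and ν ∈ ℤ_{>0}. -/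
open LaurentPolynomial

noncomputable section

/-- Laurent polynomials in one variable over `ℂ`. -/
abbrev LP1 := LaurentPolynomial ℂ

instance : IsDomain LP1 := NoZeroDivisors.to_isDomain _

/-- The operator `D = x·d/dx` on one-variable Laurent polynomials:
`D x^m = m·x^m`. -/
def D1 (p : LP1) : LP1 :=
  p.coeff.sum fun m c => AddMonoidAlgebra.single m ((m : ℂ) * c)

/-- `δ(p) = D² log p = (D²p·p − (Dp)²)/p²` as a rational function. -/
def delta1 (p : LP1) : FractionRing LP1 :=
  algebraMap LP1 (FractionRing LP1) (D1 (D1 p) * p - D1 p * D1 p) /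
    (algebraMap LP1 (FractionRing LP1) p) ^ 2

/-- The Monge–Ampère polynomial of a one-variable Laurent polynomial:
`μ(p) = p²·δ(p) = D²p·p − (Dp)²`. -/
def mu1 (p : LP1) : LP1 := D1 (D1 p) * p - D1 p * D1 p

section AuxSt13
open Polynomial

def DP (f : ℂ[X]) : ℂ[X] := Polynomial.X * Polynomial.derivative f

def muP (f : ℂ[X]) : ℂ[X] := DP (DP f) * f - DP f * DP f

lemma DP_add (f g : ℂ[X]) : DP (f + g) = DP f + DP g := by
  simp [DP, mul_add]

lemma DP_mul (f g : ℂ[X]) : DP (f * g) = DP f * g + f * DP g := by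
  simp [DP]; ring

lemma DP_C (a : ℂ) : DP (Polynomial.C a) = 0 := by simp [DP]

lemma DP_zero : DP (0 : ℂ[X]) = 0 := by simp [DP]

lemma DP_X : DP (Polynomial.X : ℂ[X]) = Polynomial.X := by simp [DP]

lemma muP_mul (f g : ℂ[X]) : muP (f * g) = g^2 * muP f + f^2 * muP g := by
  simp only [muP, DP_mul, DP_add]
  ring

lemma muP_C (a : ℂ) : muP (Polynomial.C a) = 0 := by simp [muP, DP_C, DP_zero]

lemma muP_X_add_C (a : ℂ) : muP (Polynomial.X + Polynomial.C a) = Polynomial.C a * Polynomial.X := by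
  simp only [muP, DP_add, DP_C, DP_X, add_zero]
  ring

lemma muP_pow (f : ℂ[X]) (ν : ℕ) (hν : 1 ≤ ν) :
    muP (f ^ ν) = Polynomial.C (ν : ℂ) * f ^ (2 * ν - 2) * muP f := by
  induction ν with
  | zero => omega
  | succ k ih =>
    rcases Nat.lt_or_ge k 1 with h | hk
    · obtain rfl : k = 0 := by omega
      simp
    · rw [pow_succ, muP_mul, ih hk, ← pow_mul]
      have e1 : f ^ 2 * (Polynomial.C (k:ℂ) * f ^ (2*k-2) * muP f)
          = Polynomial.C (k:ℂ) * (f^2 * f^(2*k-2)) * muP f := by ring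
      rw [e1, ← pow_add, show 2 + (2*k-2) = 2*k from by omega,
        show k*2 = 2*k from Nat.mul_comm k 2,
        show 2*(k+1) - 2 = 2*k from by omega,
        show ((k+1 : ℕ) : ℂ) = (k:ℂ) + 1 from by push_cast; ring,
        map_add, map_one]
      ring

lemma coeff_DP (f : ℂ[X]) (k : ℕ) : (DP f).coeff k = (k : ℂ) * f.coeff k := by
  cases k with
  | zero => simp [DP]
  | succ n => rw [DP, Polynomial.coeff_X_mul, Polynomial.coeff_derivative]; push_cast; ring

lemma natDegree_DP_le (f : ℂ[X]) : (DP f).natDegree ≤ f.natDegree := by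
  apply Polynomial.natDegree_le_iff_coeff_eq_zero.mpr
  intro k hk
  rw [coeff_DP, Polynomial.coeff_eq_zero_of_natDegree_lt hk, mul_zero]

lemma coeff_muP_zero (f : ℂ[X]) : (muP f).coeff 0 = 0 := by
  simp [muP, Polynomial.mul_coeff_zero, coeff_DP]

lemma coeff_muP_one (f : ℂ[X]) : (muP f).coeff 1 = f.coeff 0 * f.coeff 1 := by
  rw [muP, Polynomial.coeff_sub, Polynomial.coeff_mul, Polynomial.coeff_mul]
  simp [Finset.Nat.antidiagonal_succ, coeff_DP]
  ring

lemma coeff_mul_pred {A B : ℂ[X]} {n : ℕ} (hn : 1 ≤ n) (hA : A.natDegree ≤ n)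
    (hB : B.natDegree ≤ n) :
    (A * B).coeff (2 * n - 1) = A.coeff n * B.coeff (n-1) + A.coeff (n-1) * B.coeff n := by
  rw [Polynomial.coeff_mul]
  have hsub : ({(n, n-1), (n-1, n)} : Finset (ℕ × ℕ)) ⊆ Finset.HasAntidiagonal.antidiagonal (2*n-1) := by
    intro x hx
    simp only [Finset.mem_insert, Finset.mem_singleton] at hx
    rcases hx with rfl | rfl <;> simp [Finset.mem_antidiagonal] <;> omega
  rw [← Finset.sum_subset hsub]
  · rw [Finset.sum_pair (by intro h; injection h with h1 h2; omega)]
  · intro x hx hnx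
    simp only [Finset.HasAntidiagonal.mem_antidiagonal] at hx
    simp only [Finset.mem_insert, Finset.mem_singleton] at hnx
    rcases Nat.lt_or_ge n x.1 with h | h
    · rw [Polynomial.coeff_eq_zero_of_natDegree_lt (lt_of_le_of_lt hA h), zero_mul]
    · have : n < x.2 ∨ (x = (n, n-1) ∨ x = (n-1, n)) := by
        rcases x with ⟨i, j⟩
        simp only [Prod.mk.injEq]
        omega
      rcases this with h2 | h2
      · rw [Polynomial.coeff_eq_zero_of_natDegree_lt (lt_of_le_of_lt hB h2), mul_zero]
      · exact absurd h2 hnx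

lemma natDegree_muP_le (f : ℂ[X]) : (muP f).natDegree ≤ 2 * f.natDegree := by
  refine le_trans (Polynomial.natDegree_sub_le _ _) ?_
  simp only [max_le_iff, two_mul]
  constructor
  · exact le_trans (Polynomial.natDegree_mul_le)
      (add_le_add (le_trans (natDegree_DP_le _) (natDegree_DP_le _)) le_rfl)
  · exact le_trans (Polynomial.natDegree_mul_le)
      (add_le_add (natDegree_DP_le _) (natDegree_DP_le _))

lemma coeff_muP_two_natDegree (f : ℂ[X]) : (muP f).coeff (2 * f.natDegree) = 0 := by
  set n := f.natDegree
  rw [muP, Polynomial.coeff_sub, two_mul,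
    Polynomial.coeff_mul_add_eq_of_natDegree_le
      (le_trans (natDegree_DP_le _) (natDegree_DP_le _)) le_rfl,
    Polynomial.coeff_mul_add_eq_of_natDegree_le (natDegree_DP_le _) (natDegree_DP_le _),
    coeff_DP]
  simp only [coeff_DP]
  ring

lemma coeff_muP_top (f : ℂ[X]) (hn : 1 ≤ f.natDegree) :
    (muP f).coeff (2 * f.natDegree - 1)
      = f.coeff f.natDegree * f.coeff (f.natDegree - 1) := by
  set n := f.natDegree with hdef
  rw [muP, Polynomial.coeff_sub,
    coeff_mul_pred hn (le_trans (natDegree_DP_le _) (natDegree_DP_le _)) le_rfl,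
    coeff_mul_pred hn (natDegree_DP_le _) (natDegree_DP_le _),
    coeff_DP]
  simp only [coeff_DP]
  have hc : ((n - 1 : ℕ) : ℂ) = (n : ℂ) - 1 := by
    rw [Nat.cast_sub hn, Nat.cast_one]
  rw [hc]
  ring

lemma natDegree_muP (f : ℂ[X]) (hn : 1 ≤ f.natDegree)
    (htop : f.coeff (f.natDegree - 1) ≠ 0) :
    (muP f).natDegree = 2 * f.natDegree - 1 := by
  apply le_antisymm
  · apply Polynomial.natDegree_le_iff_coeff_eq_zero.mpr
    intro k hk
    rcases Nat.lt_or_ge (2 * f.natDegree) k with h | h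
    · exact Polynomial.coeff_eq_zero_of_natDegree_lt (lt_of_le_of_lt (natDegree_muP_le f) h)
    · have : k = 2 * f.natDegree := by omega
      rw [this]; exact coeff_muP_two_natDegree f
  · apply Polynomial.le_natDegree_of_ne_zero
    rw [coeff_muP_top f hn]
    exact mul_ne_zero (by
      intro h
      exact (Polynomial.leadingCoeff_ne_zero.mpr (fun h0 => by simp [h0] at hn)) h) htop

lemma rootMultiplicity_muP_zero (f : ℂ[X]) (h01 : f.coeff 0 * f.coeff 1 ≠ 0) :
    Polynomial.rootMultiplicity 0 (muP f) ≤ 1 := by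
  have hne : muP f ≠ 0 := fun h => h01 (by rw [← coeff_muP_one, h, Polynomial.coeff_zero])
  rw [Polynomial.rootMultiplicity_le_iff hne]
  intro hdvd
  obtain ⟨g, hg⟩ := hdvd
  apply h01
  rw [← coeff_muP_one, hg]
  simp only [Polynomial.C_0, sub_zero]
  rw [show (Polynomial.X : ℂ[X])^(1+1) * g = Polynomial.X * (Polynomial.X * g) by ring,
    Polynomial.coeff_X_mul, Polynomial.mul_coeff_zero]
  simp

lemma rootMultiplicity_muP_root (f : ℂ[X]) (hfne : f ≠ 0) (hmne : muP f ≠ 0)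
    {r : ℂ} (hr : r ≠ 0) (hroot : f.IsRoot r) :
    Polynomial.rootMultiplicity r (muP f) = 2 * Polynomial.rootMultiplicity r f - 2 := by
  set ν := Polynomial.rootMultiplicity r f with hν
  have hν1 : 1 ≤ ν := (Polynomial.rootMultiplicity_pos hfne).mpr hroot
  set u := f /ₘ (Polynomial.X - Polynomial.C r) ^ ν with hu
  have hfu : (Polynomial.X - Polynomial.C r) ^ ν * u = f :=
    Polynomial.pow_mul_divByMonic_rootMultiplicity_eq f r
  have hur : u.eval r ≠ 0 := Polynomial.eval_divByMonic_pow_rootMultiplicity_ne_zero r hfne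
  have hXr : muP (Polynomial.X - Polynomial.C r) = Polynomial.C (-r) * Polynomial.X := by
    rw [sub_eq_add_neg, ← Polynomial.C_neg, muP_X_add_C]
  have key : muP f = (Polynomial.X - Polynomial.C r) ^ (2 * ν - 2) *
      (u^2 * (Polynomial.C (ν:ℂ) * (Polynomial.C (-r) * Polynomial.X)) + (Polynomial.X - Polynomial.C r)^2 * muP u) := by
    rw [← hfu, muP_mul, muP_pow _ _ hν1, hXr, ← pow_mul,
      show ν * 2 = (2 * ν - 2) + 2 by omega, pow_add]
    ring
  set w : ℂ[X] := u^2 * (Polynomial.C (ν:ℂ) * (Polynomial.C (-r) * Polynomial.X))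
      + (Polynomial.X - Polynomial.C r)^2 * muP u with hw
  have hwr : w.eval r ≠ 0 := by
    have : w.eval r = u.eval r ^ 2 * ((ν:ℂ) * (-r * r)) := by
      simp [hw]
    rw [this]
    apply mul_ne_zero (pow_ne_zero _ hur)
    apply mul_ne_zero
    · exact Nat.cast_ne_zero.mpr (by omega)
    · exact mul_ne_zero (neg_ne_zero.mpr hr) hr
  have hwne : w ≠ 0 := fun h => hwr (by rw [h]; simp)
  rw [key, Polynomial.rootMultiplicity_mul (by rw [← key]; exact hmne),
    Polynomial.rootMultiplicity_X_sub_C_pow,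
    Polynomial.rootMultiplicity_eq_zero (by simpa [Polynomial.IsRoot] using hwr), add_zero]

lemma poly_is_pow (f : ℂ[X]) (hn : 1 ≤ f.natDegree) (h0 : f.coeff 0 ≠ 0)
    (h1 : f.coeff 1 ≠ 0) (htop1 : f.coeff (f.natDegree - 1) ≠ 0)
    (hroots : ∀ z : ℂ, z ≠ 0 → (muP f).eval z = 0 → f.eval z = 0) :
    ∃ r : ℂ, r ≠ 0 ∧ f = Polynomial.C f.leadingCoeff * (Polynomial.X - Polynomial.C r) ^ f.natDegree := by
  classical
  set n := f.natDegree with hndef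
  have hfne : f ≠ 0 := fun h => h0 (by simp [h])
  have hμne : muP f ≠ 0 := fun h =>
    (mul_ne_zero h0 h1) (by rw [← coeff_muP_one, h, Polynomial.coeff_zero])
  have hμdeg : (muP f).natDegree = 2 * n - 1 := natDegree_muP f hn htop1
  have hμcard : (muP f).roots.card = 2 * n - 1 := by
    rw [← hμdeg]
    exact (Polynomial.splits_iff_card_roots).mp (IsAlgClosed.splits _)
  have hfcard : f.roots.card = n := by
    rw [hndef]
    exact (Polynomial.splits_iff_card_roots).mp (IsAlgClosed.splits _)
  set R : Finset ℂ := f.roots.toFinset with hR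
  have h0R : (0 : ℂ) ∉ R := by
    intro h
    rw [hR, Multiset.mem_toFinset, Polynomial.mem_roots hfne] at h
    exact h0 (by simpa [Polynomial.IsRoot, Polynomial.coeff_zero_eq_eval_zero] using h)
  have hsub : (muP f).roots.toFinset ⊆ insert 0 R := by
    intro z hz
    rw [Multiset.mem_toFinset, Polynomial.mem_roots hμne] at hz
    by_cases hz0 : z = 0
    · simp [hz0]
    · refine Finset.mem_insert_of_mem ?_
      rw [hR, Multiset.mem_toFinset, Polynomial.mem_roots hfne]
      exact hroots z hz0 hz
  have hcount : (muP f).roots.card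
      = ∑ z ∈ (muP f).roots.toFinset, Polynomial.rootMultiplicity z (muP f) := by
    rw [← Multiset.toFinset_sum_count_eq]
    exact Finset.sum_congr rfl fun z _ => (Polynomial.count_roots _)
  have hfcount : f.roots.card = ∑ z ∈ R, Polynomial.rootMultiplicity z f := by
    rw [← Multiset.toFinset_sum_count_eq]
    exact Finset.sum_congr rfl fun z _ => (Polynomial.count_roots _)
  have hle : ∑ z ∈ (muP f).roots.toFinset, Polynomial.rootMultiplicity z (muP f) ≤
      ∑ z ∈ insert 0 R, Polynomial.rootMultiplicity z (muP f) :=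
    Finset.sum_le_sum_of_subset hsub
  have hinsert : ∑ z ∈ insert 0 R, Polynomial.rootMultiplicity z (muP f) =
      Polynomial.rootMultiplicity 0 (muP f)
        + ∑ z ∈ R, Polynomial.rootMultiplicity z (muP f) :=
    Finset.sum_insert h0R
  have hRval : ∀ z ∈ R, Polynomial.rootMultiplicity z (muP f)
      = 2 * Polynomial.rootMultiplicity z f - 2 := by
    intro z hz
    rw [hR, Multiset.mem_toFinset, Polynomial.mem_roots hfne] at hz
    exact rootMultiplicity_muP_root f hfne hμne (fun h => h0R (h ▸ (by
      rwa [hR, Multiset.mem_toFinset, Polynomial.mem_roots hfne]))) hz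
  have hmz1 : ∀ z ∈ R, 1 ≤ Polynomial.rootMultiplicity z f := by
    intro z hz
    rw [hR, Multiset.mem_toFinset, Polynomial.mem_roots hfne] at hz
    exact (Polynomial.rootMultiplicity_pos hfne).mpr hz
  have hcard_le : R.card ≤ n := by
    calc R.card = ∑ _z ∈ R, 1 := by simp
      _ ≤ ∑ z ∈ R, Polynomial.rootMultiplicity z f := Finset.sum_le_sum hmz1
      _ = n := by rw [← hfcount, hfcard]
  have hsumR : ∑ z ∈ R, Polynomial.rootMultiplicity z (muP f) = 2 * n - 2 * R.card := by
    have heq : ∀ z ∈ R, Polynomial.rootMultiplicity z (muP f)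
        = 2 * (Polynomial.rootMultiplicity z f - 1) := by
      intro z hz; rw [hRval z hz]; have := hmz1 z hz; omega
    have hds : ∑ z ∈ R, (Polynomial.rootMultiplicity z f - 1)
        = (∑ z ∈ R, Polynomial.rootMultiplicity z f) - ∑ _z ∈ R, 1 :=
      Finset.sum_tsub_distrib R hmz1
    rw [Finset.sum_congr rfl heq, ← Finset.mul_sum, hds, ← hfcount, hfcard]
    simp only [Finset.sum_const, smul_eq_mul, mul_one]
    omega
  have hRcard : R.card ≤ 1 := by
    have h2 := hcount ▸ hμcard
    have hz0 := rootMultiplicity_muP_zero f (mul_ne_zero h0 h1)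
    omega
  have hRne : R.Nonempty := by
    obtain ⟨z, hz⟩ := Complex.exists_root (f := f) (by
      rw [Polynomial.degree_eq_natDegree hfne]
      exact_mod_cast (by omega : 0 < n))
    exact ⟨z, by rw [hR, Multiset.mem_toFinset, Polynomial.mem_roots hfne]; exact hz⟩
  obtain ⟨r, hRr⟩ := Finset.card_eq_one.mp (le_antisymm hRcard hRne.card_pos)
  have hr0 : r ≠ 0 := fun h => h0R (by rw [hRr, h]; exact Finset.mem_singleton_self 0)
  have hrepl : f.roots = Multiset.replicate n r := by
    rw [Multiset.eq_replicate]
    refine ⟨hfcard, fun b hb => ?_⟩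
    have : b ∈ R := Multiset.mem_toFinset.mpr hb
    rwa [hRr, Finset.mem_singleton] at this
  refine ⟨r, hr0, ?_⟩
  have := (Polynomial.C_leadingCoeff_mul_prod_multiset_X_sub_C (p := f) (by rw [hfcard])).symm
  rw [hrepl] at this
  simpa [Multiset.map_replicate, Multiset.prod_replicate] using this

open Polynomial in
lemma D1_single (m : ℤ) (c : ℂ) :
    D1 (AddMonoidAlgebra.single m c) = AddMonoidAlgebra.single m ((m:ℂ) * c) := by
  rw [D1, AddMonoidAlgebra.coeff_single]
  exact Finsupp.sum_single_index (by simp)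

lemma D1_zero : D1 0 = 0 := by simp [D1]

lemma D1_add (p q : LP1) : D1 (p + q) = D1 p + D1 q := by
  rw [D1, D1, D1, AddMonoidAlgebra.coeff_add]
  exact Finsupp.sum_add_index (fun m _ => by simp) (fun m _ b1 b2 => by
    rw [mul_add]; exact AddMonoidAlgebra.single_add _ _ _)

open Polynomial in
lemma DP_monomial (k : ℕ) (a : ℂ) : DP (monomial k a) = monomial k ((k:ℂ) * a) := by
  cases k with
  | zero => simp [DP]
  | succ n =>
    rw [DP, derivative_monomial]
    rw [X_mul_monomial]
    simp only [Nat.add_sub_cancel]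
    congr 1
    push_cast
    ring

open Polynomial in
lemma toLaurent_monomial (n : ℕ) (a : ℂ) :
    toLaurent (monomial n a : ℂ[X]) = AddMonoidAlgebra.single (n:ℤ) a := by
  rw [← C_mul_X_pow_eq_monomial, toLaurent_C_mul_X_pow, ← single_eq_C_mul_T]

open Polynomial in
lemma D1_toLaurent (f : ℂ[X]) : D1 (toLaurent f) = toLaurent (DP f) := by
  induction f using Polynomial.induction_on' with
  | add p q hp hq => rw [map_add, D1_add, hp, hq, DP_add, map_add]
  | monomial n a =>
    rw [DP_monomial, toLaurent_monomial, toLaurent_monomial, D1_single]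
    congr 1

lemma D1_single_mul_T (a : ℤ) (c : ℂ) (m : ℤ) :
    D1 ((AddMonoidAlgebra.single a c : LP1) * T m)
      = D1 (AddMonoidAlgebra.single a c : LP1) * T m
      + LaurentPolynomial.C ((m:ℂ)) * ((AddMonoidAlgebra.single a c : LP1) * T m) := by
  have hT : (T m : LP1) = AddMonoidAlgebra.single m 1 := rfl
  have hC : (LaurentPolynomial.C (m:ℂ) : LP1) = AddMonoidAlgebra.single 0 ((m:ℂ)) := rfl
  rw [hT, hC, AddMonoidAlgebra.single_mul_single, D1_single, D1_single,
    AddMonoidAlgebra.single_mul_single, AddMonoidAlgebra.single_mul_single]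
  rw [show ((0:ℤ) + (a + m)) = a + m by ring, mul_one, mul_one]
  have h3 : ((a + m : ℤ) : ℂ) * c = (a:ℂ)*c + (m:ℂ)*c := by push_cast; ring
  rw [h3]
  exact AddMonoidAlgebra.single_add _ _ _

lemma D1_mul_T (q : LP1) (m : ℤ) :
    D1 (q * T m) = D1 q * T m + LaurentPolynomial.C ((m:ℂ)) * (q * T m) := by
  induction q using LaurentPolynomial.induction_on' with
  | add p q hp hq =>
    rw [add_mul, D1_add, D1_add, hp, hq, add_mul, mul_add]
    ring
  | C_mul_T n a =>
    rw [← single_eq_C_mul_T]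
    exact D1_single_mul_T n a m

lemma D1_C_mul (a : ℂ) (p : LP1) :
    D1 (LaurentPolynomial.C a * p) = LaurentPolynomial.C a * D1 p := by
  induction p using LaurentPolynomial.induction_on' with
  | add p q hp hq => rw [mul_add, D1_add, D1_add, hp, hq, mul_add]
  | C_mul_T n b =>
    rw [← single_eq_C_mul_T, ← single_eq_C,
      AddMonoidAlgebra.single_mul_single, D1_single, D1_single,
      AddMonoidAlgebra.single_mul_single]
    have h3 : (n:ℂ) * (a*b) = a * ((n:ℂ)*b) := by ring
    simp only [zero_add]
    rw [h3]

open Polynomial in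
lemma mu1_decomp (f : ℂ[X]) (s : ℤ) :
    mu1 (toLaurent f * T s) = T (2*s) * toLaurent (muP f) := by
  have h1 : D1 (toLaurent f * T s) = toLaurent (DP f) * T s
      + LaurentPolynomial.C ((s:ℂ)) * (toLaurent f * T s) := by
    rw [D1_mul_T, D1_toLaurent]
  have h2 : D1 (D1 (toLaurent f * T s)) = toLaurent (DP (DP f)) * T s
      + LaurentPolynomial.C ((s:ℂ)) * (toLaurent (DP f) * T s)
      + LaurentPolynomial.C ((s:ℂ)) * (toLaurent (DP f) * T s
        + LaurentPolynomial.C ((s:ℂ)) * (toLaurent f * T s)) := by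
    rw [h1, D1_add, D1_mul_T, D1_toLaurent, D1_C_mul, h1]
  rw [mu1, h2, h1, muP, map_sub, map_mul, map_mul,
    show (2*s) = s + s by ring, T_add]
  ring

open Polynomial in
lemma laurent_decomp (p : LP1) (s : ℤ) (hmem : ∀ a : ℤ, a < s → p.coeff a = 0) :
    ∃ f : ℂ[X], p = toLaurent f * T s ∧ ∀ k : ℕ, f.coeff k = p.coeff (s + k) := by
  classical
  have hinj : Function.Injective (fun k : ℕ => s + (k:ℤ)) := by
    intro k l h
    simp only at h
    omega
  set F : ℕ →₀ ℂ := Finsupp.comapDomain (fun k : ℕ => s + (k:ℤ)) p.coeff hinj.injOn with hF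
  have hcoeff : ∀ k : ℕ, (⟨.ofCoeff F⟩ : ℂ[X]).coeff k = p.coeff (s + k) := by
    intro k
    rw [coeff_ofFinsupp, AddMonoidAlgebra.coeff_ofCoeff]
    exact Finsupp.comapDomain_apply _ _ _ _
  refine ⟨⟨.ofCoeff F⟩, ?_, hcoeff⟩
  apply LaurentPolynomial.ext
  intro a
  have hT : (T s : LP1) = AddMonoidAlgebra.single s 1 := rfl
  rw [hT, AddMonoidAlgebra.coeff_mul_single_apply, mul_one, coeff_toLaurent]
  by_cases hcase : s ≤ a
  · have h1 : a - s = (((a - s).toNat : ℕ) : ℤ) := by omega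
    rw [← sub_eq_add_neg, h1, show (((a - s).toNat : ℕ) : ℤ) = Nat.castEmbedding (a - s).toNat from rfl,
        Finsupp.mapDomain_apply Nat.castEmbedding.injective]
    have h2 : (⟨.ofCoeff F⟩ : ℂ[X]).toFinsupp.coeff = F := rfl
    rw [h2]
    have h3 := hcoeff (a - s).toNat
    rw [coeff_ofFinsupp, AddMonoidAlgebra.coeff_ofCoeff] at h3
    rw [h3]
    congr 1
    omega
  · rw [Finsupp.mapDomain_notin_range]
    · exact hmem a (lt_of_not_ge hcase)
    · rintro ⟨k, hk⟩
      have hk' : ((k : ℕ) : ℤ) = a + -s := hk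
      omega

end AuxSt13

/-- let `p ∈ ℂ[x^{±1}]` be nonzero with unimodular support,
i.e. the exponents adjacent to both endpoints of its Newton segment occur in
the support. Then `μ(p) ∣ p^κ` for some positive integer `κ` (the generalized
Einstein condition) if and only if `p = c·x^m·(x+ξ)^ν` with `c, ξ ∈ ℂ*`,
`m ∈ ℤ` and `ν ∈ ℤ_{>0}`. -/

theorem statement13 (p : LP1) (hp : p ≠ 0)
    (huni : 1 < p.coeff.support.card →
      p.coeff.support.min' (Finsupp.support_nonempty_iff.mpr (mt AddMonoidAlgebra.coeff_eq_zero.mp hp)) + 1 ∈ p.coeff.support ∧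
      p.coeff.support.max' (Finsupp.support_nonempty_iff.mpr (mt AddMonoidAlgebra.coeff_eq_zero.mp hp)) - 1 ∈ p.coeff.support) :
    (∃ κ : ℕ, 0 < κ ∧ mu1 p ∣ p ^ κ) ↔
      ∃ (c ξ : ℂ) (m : ℤ) (ν : ℕ), c ≠ 0 ∧ ξ ≠ 0 ∧ 0 < ν ∧
        p = C c * T m * (T 1 + C ξ) ^ ν := by
  classical
  constructor
  · rintro ⟨κ, hκ, hdvd⟩
    have hS : p.coeff.support.Nonempty := Finsupp.support_nonempty_iff.mpr (mt AddMonoidAlgebra.coeff_eq_zero.mp hp)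
    set s : ℤ := p.coeff.support.min' hS with hs_def
    set t : ℤ := p.coeff.support.max' hS with ht_def
    have hst : s ≤ t := Finset.min'_le _ _ (p.coeff.support.max'_mem hS)
    have hps : p.coeff s ≠ 0 := Finsupp.mem_support_iff.mp (p.coeff.support.min'_mem hS)
    have hpt : p.coeff t ≠ 0 := Finsupp.mem_support_iff.mp (p.coeff.support.max'_mem hS)
    have hmem : ∀ a : ℤ, a < s → p.coeff a = 0 := by
      intro a ha
      by_contra h
      exact absurd (Finset.min'_le _ _ (Finsupp.mem_support_iff.mpr h)) (by omega)
    obtain ⟨f, hpf, hcoeff⟩ := laurent_decomp p s hmem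
    have hf0 : f.coeff 0 ≠ 0 := by rw [hcoeff 0]; simpa using hps
    have hfne : f ≠ 0 := fun h => hf0 (by simp [h])
    set n : ℕ := (t - s).toNat with hn_def
    have hfn : f.coeff n ≠ 0 := by
      rw [hcoeff n, show s + ((t - s).toNat : ℤ) = t by omega]
      exact hpt
    have hdeg : f.natDegree = n := by
      apply le_antisymm
      · apply Polynomial.natDegree_le_iff_coeff_eq_zero.mpr
        intro k hk
        rw [hcoeff k]
        apply Finsupp.notMem_support_iff.mp
        intro hmm
        have := Finset.le_max' _ _ hmm
        rw [← ht_def] at this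
        omega
      · exact Polynomial.le_natDegree_of_ne_zero hfn
    have hmu : mu1 p = T (2*s) * Polynomial.toLaurent (muP f) := by
      rw [hpf]; exact mu1_decomp f s
    rw [hmu] at hdvd
    rcases Nat.lt_or_ge 1 p.coeff.support.card with hcard | hcard
    swap
    · exfalso
      obtain ⟨a, hSa⟩ := Finset.card_eq_one.mp (le_antisymm hcard hS.card_pos)
      have hta : t ∈ p.coeff.support := p.coeff.support.max'_mem hS
      have hsa : s ∈ p.coeff.support := p.coeff.support.min'_mem hS
      rw [hSa, Finset.mem_singleton] at hta hsa
      have hts : t = s := by rw [hta, hsa]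
      have hn0 : f.natDegree = 0 := by rw [hdeg]; omega
      have hfC : f = Polynomial.C (f.coeff 0) := Polynomial.eq_C_of_natDegree_eq_zero hn0
      have hzero : T (2*s) * Polynomial.toLaurent (muP f) = 0 := by
        rw [hfC, muP_C, map_zero, mul_zero]
      rw [hzero] at hdvd
      have := zero_dvd_iff.mp hdvd
      exact hp (pow_eq_zero_iff (by omega : κ ≠ 0) |>.mp this)
    · obtain ⟨hs1, ht1⟩ := huni hcard
      have hlt : s < t := Finset.min'_lt_max'_of_card _ hcard
      have hn1 : 1 ≤ n := by omega
      have h1 : f.coeff 1 ≠ 0 := by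
        rw [hcoeff 1]
        simpa using Finsupp.mem_support_iff.mp hs1
      have htop1 : f.coeff (n - 1) ≠ 0 := by
        rw [hcoeff (n-1), show s + ((n - 1 : ℕ) : ℤ) = t - 1 by omega]
        exact Finsupp.mem_support_iff.mp ht1
      have hpk : p ^ κ = Polynomial.toLaurent (f ^ κ) * T ((κ:ℤ) * s) := by
        rw [hpf, mul_pow, ← map_pow, T_pow]
      have h2 : Polynomial.toLaurent (muP f) ∣ Polynomial.toLaurent (f ^ κ) := by
        have ha : Polynomial.toLaurent (muP f) ∣ p ^ κ :=
          dvd_trans (dvd_mul_left _ _) hdvd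
        have hb := ha.mul_right (T (-((κ:ℤ) * s)))
        rw [hpk, mul_T_assoc, add_neg_cancel, T_zero, mul_one] at hb
        exact hb
      obtain ⟨q, hq⟩ := h2
      obtain ⟨b, g, hgb⟩ := exists_T_pow q
      have hfac : f ^ κ * Polynomial.X ^ b = muP f * g := by
        apply Polynomial.toLaurent_injective
        rw [map_mul, map_mul, Polynomial.toLaurent_X_pow, hq, hgb]
        ring
      have hroots : ∀ z : ℂ, z ≠ 0 → (muP f).eval z = 0 → f.eval z = 0 := by
        intro z hz hmz
        have hev := congrArg (Polynomial.eval z) hfac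
        rw [Polynomial.eval_mul, Polynomial.eval_mul, Polynomial.eval_pow,
          Polynomial.eval_pow, Polynomial.eval_X, hmz, zero_mul] at hev
        rcases mul_eq_zero.mp hev with h | h
        · exact pow_eq_zero_iff (by omega : κ ≠ 0) |>.mp h
        · exact absurd h (pow_ne_zero _ hz)
      obtain ⟨r, hr0, hfr⟩ := poly_is_pow f (by rw [hdeg]; exact hn1) hf0 h1
        (by rw [hdeg]; exact htop1) hroots
      refine ⟨f.leadingCoeff, -r, s, f.natDegree, Polynomial.leadingCoeff_ne_zero.mpr hfne,
        neg_ne_zero.mpr hr0, by rw [hdeg]; omega, ?_⟩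
      rw [hpf]
      nth_rewrite 1 [hfr]
      rw [map_mul, map_pow, Polynomial.toLaurent_C, map_sub, Polynomial.toLaurent_X,
        Polynomial.toLaurent_C, map_neg]
      ring
  · rintro ⟨c, ξ, m, ν, hc, hξ, hν, hpeq⟩
    refine ⟨2*ν, by omega, ?_⟩
    have hν1 : 1 ≤ ν := hν
    have hrepr : (C c * T m * (T 1 + C ξ) ^ ν : LP1)
        = Polynomial.toLaurent (Polynomial.C c * (Polynomial.X + Polynomial.C ξ)^ν) * T m := by
      rw [map_mul, map_pow, Polynomial.toLaurent_C, map_add, Polynomial.toLaurent_X,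
        Polynomial.toLaurent_C]
      ring
    rw [hpeq, hrepr, mu1_decomp]
    have hmuP : muP (Polynomial.C c * (Polynomial.X + Polynomial.C ξ)^ν)
        = Polynomial.C c ^ 2 * (Polynomial.C (ν:ℂ)
          * (Polynomial.X + Polynomial.C ξ)^(2*ν-2) * (Polynomial.C ξ * Polynomial.X)) := by
      rw [muP_mul, muP_C, muP_pow _ _ hν1, muP_X_add_C]
      ring
    rw [hmuP]
    have hmap : Polynomial.toLaurent (Polynomial.C c ^ 2 * (Polynomial.C (ν:ℂ)
          * (Polynomial.X + Polynomial.C ξ)^(2*ν-2) * (Polynomial.C ξ * Polynomial.X)))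
        = (LaurentPolynomial.C c^2 * LaurentPolynomial.C (ν:ℂ) * LaurentPolynomial.C ξ * T 1)
          * (T 1 + LaurentPolynomial.C ξ)^(2*ν-2) := by
      simp only [map_mul, map_pow, map_add, Polynomial.toLaurent_C, Polynomial.toLaurent_X]
      ring
    rw [hmap]
    have hassoc : T (2*m) * ((LaurentPolynomial.C c^2 * LaurentPolynomial.C (ν:ℂ)
          * LaurentPolynomial.C ξ * T 1) * (T 1 + LaurentPolynomial.C ξ)^(2*ν-2))
        = (T (2*m) * (LaurentPolynomial.C c^2 * LaurentPolynomial.C (ν:ℂ)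
          * LaurentPolynomial.C ξ * T 1)) * (T 1 + LaurentPolynomial.C ξ)^(2*ν-2) := by
      ring
    rw [hassoc]
    have hpk2 : (Polynomial.toLaurent (Polynomial.C c * (Polynomial.X + Polynomial.C ξ)^ν)
          * T m) ^ (2*ν)
        = (LaurentPolynomial.C c ^ (2*ν) * T (((2*ν : ℕ) : ℤ) * m))
          * (T 1 + LaurentPolynomial.C ξ)^(ν * (2*ν)) := by
      simp only [map_mul, map_pow, map_add, Polynomial.toLaurent_C, Polynomial.toLaurent_X,
        mul_pow, T_pow, ← pow_mul]
      ring
    rw [hpk2]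
    apply mul_dvd_mul
    · apply IsUnit.dvd
      refine (isUnit_T (2*m)).mul ?_
      refine ((((hc.isUnit.map (LaurentPolynomial.C (R := ℂ))).pow 2).mul
        ((show ((ν:ℂ)) ≠ 0 from Nat.cast_ne_zero.mpr (by omega)).isUnit.map
          (LaurentPolynomial.C (R := ℂ)))).mul
        (hξ.isUnit.map (LaurentPolynomial.C (R := ℂ)))).mul (isUnit_T 1)
    · apply pow_dvd_pow
      have h := Nat.le_mul_of_pos_left (2*ν) hν
      omega

end
end
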